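/- Let φ(x, w̄ₙ) be a satisfiable first-order formula invariant with respect to asimulations, and let IC(φ) be the set of Σ_φ-formulas in variables x, w̄ₙ that are standard x-translations of intuitionistic formulas and logical consequences of φ. Then IC(φ) ⊨ φ. -/

import Mathlib

namespace IPC

/-- The classical vocabulary Σ: binary R, binary E, and for each intuitionistic
`n`-ary predicate letter indexed by `m` a classical `(n+1)`-ary letter `P n m`. -/
inductive Sym : Type
  | R : Sym
  | E : Sym
  | P : ℕ → ℕ → Sym
  deriving DecidableEq

def Sym.arity : Sym → ℕ
  | .R => 2
  | .E => 2
  | .P n _ => n + 1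

theorem Sym.arity_pos (s : Sym) : 0 < s.arity := by
  cases s <;> simp [Sym.arity]

/-- A first-order model for the vocabulary Σ. -/
structure Model : Type 1 where
  D : Type
  ne : Nonempty D
  rel : ∀ s : Sym, (Fin s.arity → D) → Prop

/-- First-order formulas (with identity) over Σ; variables are natural numbers. -/
inductive Fml : Type
  | atom (s : Sym) (args : Fin s.arity → ℕ)
  | eq (v w : ℕ)
  | fls
  | neg (φ : Fml)
  | conj (φ ψ : Fml)
  | disj (φ ψ : Fml)
  | impl (φ ψ : Fml)
  | all (v : ℕ) (φ : Fml)
  | ex (v : ℕ) (φ : Fml)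

/-- Tarskian satisfaction relative to a variable assignment. -/
def Fml.eval (M : Model) : Fml → (ℕ → M.D) → Prop
  | .atom s args, f => M.rel s (fun i => f (args i))
  | .eq v w, f => f v = f w
  | .fls, _ => False
  | .neg φ, f => ¬ φ.eval M f
  | .conj φ ψ, f => φ.eval M f ∧ ψ.eval M f
  | .disj φ ψ, f => φ.eval M f ∨ ψ.eval M f
  | .impl φ ψ, f => φ.eval M f → ψ.eval M f
  | .all v φ, f => ∀ d : M.D, φ.eval M (Function.update f v d)
  | .ex v φ, f => ∃ d : M.D, φ.eval M (Function.update f v d)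

/-- Degree: maximal nesting of quantifiers. -/
def Fml.deg : Fml → ℕ
  | .atom _ _ => 0
  | .eq _ _ => 0
  | .fls => 0
  | .neg φ => φ.deg
  | .conj φ ψ => max φ.deg ψ.deg
  | .disj φ ψ => max φ.deg ψ.deg
  | .impl φ ψ => max φ.deg ψ.deg
  | .all _ φ => φ.deg + 1
  | .ex _ φ => φ.deg + 1

/-- Free variables. -/
def Fml.free : Fml → Finset ℕ
  | .atom _ args => Finset.univ.image args
  | .eq v w => {v, w}
  | .fls => ∅
  | .neg φ => φ.free
  | .conj φ ψ => φ.free ∪ ψ.free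
  | .disj φ ψ => φ.free ∪ ψ.free
  | .impl φ ψ => φ.free ∪ ψ.free
  | .all v φ => φ.free.erase v
  | .ex v φ => φ.free.erase v

/-- All variables occurring (free or bound). -/
def Fml.vars : Fml → Finset ℕ
  | .atom _ args => Finset.univ.image args
  | .eq v w => {v, w}
  | .fls => ∅
  | .neg φ => φ.vars
  | .conj φ ψ => φ.vars ∪ ψ.vars
  | .disj φ ψ => φ.vars ∪ ψ.vars
  | .impl φ ψ => φ.vars ∪ ψ.vars
  | .all v φ => insert v φ.vars
  | .ex v φ => insert v φ.vars

/-- Predicate symbols occurring in a formula. -/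
def Fml.syms : Fml → Finset Sym
  | .atom s _ => {s}
  | .eq _ _ => ∅
  | .fls => ∅
  | .neg φ => φ.syms
  | .conj φ ψ => φ.syms ∪ ψ.syms
  | .disj φ ψ => φ.syms ∪ ψ.syms
  | .impl φ ψ => φ.syms ∪ ψ.syms
  | .all _ φ => φ.syms
  | .ex _ φ => φ.syms

/-- Σ_φ : the symbols of φ together with R and E. -/
def sigOf (φ : Fml) : Finset Sym := φ.syms ∪ {Sym.R, Sym.E}

/-- Logical equivalence. -/
def FmlEquiv (φ ψ : Fml) : Prop :=
  ∀ (M : Model) (f : ℕ → M.D), φ.eval M f ↔ ψ.eval M f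

/-- Logical consequence between single formulas. -/
def EntailsF (φ ψ : Fml) : Prop :=
  ∀ (M : Model) (f : ℕ → M.D), φ.eval M f → ψ.eval M f

/-- Logical consequence from a set of formulas. -/
def EntailsSet (Γ : Set Fml) (φ : Fml) : Prop :=
  ∀ (M : Model) (f : ℕ → M.D), (∀ ψ ∈ Γ, ψ.eval M f) → φ.eval M f

def Satisfiable (φ : Fml) : Prop := ∃ (M : Model) (f : ℕ → M.D), φ.eval M f

/-- Intuitionistic predicate formulas (without identity); an `n`-ary letter
indexed by `m` takes `n` object variables. -/
inductive IFml : Type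
  | atom (n m : ℕ) (args : Fin n → ℕ)
  | fls
  | conj (i j : IFml)
  | disj (i j : IFml)
  | impl (i j : IFml)
  | all (v : ℕ) (i : IFml)
  | ex (v : ℕ) (i : IFml)

/-- Standard x-translation.  Object variables `v` of intuitionistic formulas are
represented as the even classical variables `2*v`; world variables are odd, and
a fresh world variable for a binder under world variable `x` is `x+2`. -/
def ST : IFml → ℕ → Fml
  | .atom n m args, x => .atom (.P n m) (Fin.cons x (fun i => 2 * args i))
  | .fls, x => .neg (.eq x x)
  | .conj i j, x => .conj (ST i x) (ST j x)
  | .disj i j, x => .disj (ST i x) (ST j x)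
  | .impl i j, x =>
      .all (x + 2) (.impl (.atom .R ![x, x + 2]) (.impl (ST i (x + 2)) (ST j (x + 2))))
  | .ex w i, x => .ex (2 * w) (.conj (.atom .E ![x, 2 * w]) (ST i x))
  | .all w i, x =>
      .all (x + 2) (.all (2 * w)
        (.impl (.conj (.atom .R ![x, x + 2]) (.atom .E ![x + 2, 2 * w])) (ST i (x + 2))))

/-- `ψ` is a standard x-translation (with x the fixed variable 1). -/
def IsSTF (ψ : Fml) : Prop := ∃ i : IFml, ψ = ST i 1

/-- Truth of `φ(x, w̄ₙ)` at the n-ary evaluation point `(M, a, b̄ₙ)`: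
true under every assignment sending `x` (variable 1) to `a` and `wᵢ`
(variable `2*i`) to `bᵢ`. -/
def Sat (M : Model) (a : M.D) (bs : List M.D) (φ : Fml) : Prop :=
  ∀ f : ℕ → M.D, f 1 = a → (∀ i : Fin bs.length, f (2 * i.val) = bs.get i) → φ.eval M f

/-- Free variables of φ are among x, w₁, …, wₙ. -/
def FreeOK (n : ℕ) (φ : Fml) : Prop :=
  ∀ v ∈ φ.free, v = 1 ∨ ∃ i < n, v = 2 * i

def relR (α : Model) (a b : α.D) : Prop := α.rel .R ![a, b]
def relE (α : Model) (a b : α.D) : Prop := α.rel .E ![a, b]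

/-- Truth of the atom `P(x, w̄_l)` at `(α, a, ō_l)`. -/
def atomSat (α : Model) (P : Sym) (a : α.D) (os : List α.D) : Prop :=
  ∃ h : P.arity = os.length + 1, α.rel P (fun i => (a :: os).get (Fin.cast h i))

/-- The model named by a side: `true ↦ M`, `false ↦ N`. -/
def side (M N : Model) : Bool → Model
  | true => M
  | false => N

/-- `⟨(M,a,b̄ₙ),(N,c,d̄ₙ)⟩_k`-asimulation conditions (without the condition on the
distinguished points).  The relation `A` relates tuples `(w̄_m, a'; ō_l)` over one
of the two models to similar tuples over one of the two models. -/
structure IsKAsim (Θ : Set Sym) (M N : Model) (n k : ℕ)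
    (A : ∀ s t : Bool, List (side M N s).D → (side M N s).D → List (side M N s).D →
          List (side M N t).D → (side M N t).D → List (side M N t).D → Prop) : Prop where
  lengths : ∀ s t ws a' os ws' c' os', A s t ws a' os ws' c' os' →
      ws.length = ws'.length ∧ os.length = os'.length
  atoms : ∀ s t ws a' os ws' c' os', A s t ws a' os ws' c' os' →
      ∀ P ∈ Θ, P ≠ Sym.R → P ≠ Sym.E →
        atomSat (side M N s) P a' os → atomSat (side M N t) P c' os'
  back : ∀ s t ws a' os ws' c' os', A s t ws a' os ws' c' os' →
      ws.length + os.length < n + k →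
      ∀ c'', relR (side M N t) c' c'' →
        ∃ a'', relR (side M N s) a' a'' ∧
          A t s (ws' ++ [c']) c'' os' (ws ++ [a']) a'' os ∧
          A s t (ws ++ [a']) a'' os (ws' ++ [c']) c'' os'
  exi : ∀ s t ws a' os ws' c' os', A s t ws a' os ws' c' os' →
      ws.length + os.length < n + k →
      ∀ b'', relE (side M N s) a' b'' →
        ∃ d'', relE (side M N t) c' d'' ∧
          A s t ws a' (os ++ [b'']) ws' c' (os' ++ [d''])
  uni : ∀ s t ws a' os ws' c' os', A s t ws a' os ws' c' os' →
      ws.length + os.length + 1 < n + k →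
      ∀ c'' d'', relR (side M N t) c' c'' → relE (side M N t) c'' d'' →
        ∃ a'' b'', relR (side M N s) a' a'' ∧ relE (side M N s) a'' b'' ∧
          A s t (ws ++ [a']) a'' (os ++ [b'']) (ws' ++ [c']) c'' (os' ++ [d''])

/-- (Unparametrized) asimulation conditions. -/
structure IsAsim (Θ : Set Sym) (M N : Model)
    (A : ∀ s t : Bool, (side M N s).D → List (side M N s).D →
          (side M N t).D → List (side M N t).D → Prop) : Prop where
  lengths : ∀ s t a' os c' os', A s t a' os c' os' → os.length = os'.length
  atoms : ∀ s t a' os c' os', A s t a' os c' os' →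
      ∀ P ∈ Θ, P ≠ Sym.R → P ≠ Sym.E →
        atomSat (side M N s) P a' os → atomSat (side M N t) P c' os'
  back : ∀ s t a' os c' os', A s t a' os c' os' →
      ∀ c'', relR (side M N t) c' c'' →
        ∃ a'', relR (side M N s) a' a'' ∧ A t s c'' os' a'' os ∧ A s t a'' os c'' os'
  exi : ∀ s t a' os c' os', A s t a' os c' os' →
      ∀ b'', relE (side M N s) a' b'' →
        ∃ d'', relE (side M N t) c' d'' ∧ A s t a' (os ++ [b'']) c' (os' ++ [d''])
  uni : ∀ s t a' os c' os', A s t a' os c' os' →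
      ∀ c'' d'', relR (side M N t) c' c'' → relE (side M N t) c'' d'' →
        ∃ a'' b'', relR (side M N s) a' a'' ∧ relE (side M N s) a'' b'' ∧
          A s t a'' (os ++ [b'']) c'' (os' ++ [d''])

/-- Invariance with respect to k-asimulations (for formulas `φ(x, w̄ₙ)`). -/
def KInvariant (φ : Fml) (n k : ℕ) : Prop :=
  ∀ (Θ : Set Sym), ↑(sigOf φ) ⊆ Θ →
    ∀ (M N : Model) (a : M.D) (bs : List M.D) (c : N.D) (ds : List N.D),
      bs.length = n → ds.length = n →
      (∃ A, IsKAsim Θ M N n k A ∧ A true false [] a bs [] c ds) →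
      Sat M a bs φ → Sat N c ds φ

/-- Invariance with respect to asimulations. -/
def AsimInvariant (φ : Fml) (n : ℕ) : Prop :=
  ∀ (Θ : Set Sym), ↑(sigOf φ) ⊆ Θ →
    ∀ (M N : Model) (a : M.D) (bs : List M.D) (c : N.D) (ds : List N.D),
      bs.length = n → ds.length = n →
      (∃ A, IsAsim Θ M N A ∧ A true false a bs c ds) →
      Sat M a bs φ → Sat N c ds φ

def conjList : List Fml → Fml
  | [] => .neg .fls
  | φ :: l => .conj φ (conjList l)

def disjList : List Fml → Fml
  | [] => .fls
  | φ :: l => .disj φ (disjList l)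

/-- A `(Σ_φ, (x, w̄ₙ), k)`-formula that is a standard x-translation. -/
def GoodFml (φ : Fml) (n k : ℕ) (ψ : Fml) : Prop :=
  ψ.syms ⊆ sigOf φ ∧ FreeOK n ψ ∧ ψ.deg ≤ k ∧ IsSTF ψ

/-- A complete `(φ, (x, w̄ₙ), k)`-conjunction, given by its list of conjuncts. -/
def CompleteConj (φ : Fml) (n k : ℕ) (L : List Fml) : Prop :=
  (∀ ψ ∈ L, GoodFml φ n k ψ) ∧
  ∃ (M : Model) (a : M.D) (bs : List M.D), bs.length = n ∧
    Sat M a bs (conjList L) ∧ Sat M a bs φ ∧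
    ∀ ψ : Fml, GoodFml φ n k ψ → Sat M a bs ψ → EntailsF (conjList L) ψ

/-- All Θ-formulas that are standard x-translations of intuitionistic formulas
true at `(α, a, ōₗ)` are true at `(β, c, d̄ₗ)`. -/
def ITLe (Θ : Set Sym) (α : Model) (a : α.D) (os : List α.D)
    (β : Model) (c : β.D) (ds : List β.D) : Prop :=
  ∀ i : IFml, ↑(ST i 1).syms ⊆ Θ → FreeOK os.length (ST i 1) →
    Sat α a os (ST i 1) → Sat β c ds (ST i 1)

/-- ω-saturation: every type over finitely many parameters (the values of the
assignment `f` on the finite set `W`) in finitely many variables (`V`) that is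
finitely satisfiable in `M` is realized in `M`. -/
def OmegaSaturated (M : Model) : Prop :=
  ∀ (f : ℕ → M.D) (V W : Finset ℕ) (Γ : Set Fml),
    (∀ ψ ∈ Γ, ↑ψ.free ⊆ (↑(V ∪ W) : Set ℕ)) →
    (∀ Γ' : Finset Fml, ↑Γ' ⊆ Γ →
      ∃ g : ℕ → M.D, (∀ v ∉ V, g v = f v) ∧ ∀ ψ ∈ Γ', ψ.eval M g) →
    ∃ g : ℕ → M.D, (∀ v ∉ V, g v = f v) ∧ ∀ ψ ∈ Γ, ψ.eval M g

/-- The intuitionistic consequences of φ: Σ_φ-formulas in the variables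
x, w̄ₙ that are standard x-translations and follow from φ. -/
def IC (φ : Fml) (n : ℕ) : Set Fml :=
  {ψ | ψ.syms ⊆ sigOf φ ∧ FreeOK n ψ ∧ IsSTF ψ ∧ EntailsF φ ψ}

/-! K-relative notions. -/

def KSatisfiable (K : Set Model) (Γ : Set Fml) : Prop :=
  ∃ M ∈ K, ∃ f : ℕ → M.D, ∀ ψ ∈ Γ, ψ.eval M f

def KEntails (K : Set Model) (φ ψ : Fml) : Prop := ¬ KSatisfiable K {φ, ψ.neg}

def KEquiv (K : Set Model) (φ ψ : Fml) : Prop := KEntails K φ ψ ∧ KEntails K ψ φ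

def KAsimInvariant (K : Set Model) (φ : Fml) (n : ℕ) : Prop :=
  ∀ (Θ : Set Sym), ↑(sigOf φ) ⊆ Θ →
    ∀ (M N : Model), M ∈ K → N ∈ K →
      ∀ (a : M.D) (bs : List M.D) (c : N.D) (ds : List N.D),
        bs.length = n → ds.length = n →
        (∃ A, IsAsim Θ M N A ∧ A true false a bs c ds) →
        Sat M a bs φ → Sat N c ds φ

end IPC
namespace IPC

/-! ### Small unfolding lemmas -/

lemma vec2_eval {D : Type} (f : ℕ → D) (x y : ℕ) :
    (fun i => f ((![x, y] : Fin 2 → ℕ) i)) = ![f x, f y] := by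
  funext i; fin_cases i <;> rfl

lemma free_eq (v w : ℕ) : (Fml.eq v w).free = {v, w} := rfl
lemma free_fls : (Fml.fls).free = ∅ := rfl
lemma free_neg (φ : Fml) : (Fml.neg φ).free = φ.free := rfl
lemma free_conj (φ ψ : Fml) : (Fml.conj φ ψ).free = φ.free ∪ ψ.free := rfl
lemma free_disj (φ ψ : Fml) : (Fml.disj φ ψ).free = φ.free ∪ ψ.free := rfl
lemma free_impl (φ ψ : Fml) : (Fml.impl φ ψ).free = φ.free ∪ ψ.free := rfl
lemma free_all (v : ℕ) (φ : Fml) : (Fml.all v φ).free = φ.free.erase v := rfl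
lemma free_ex (v : ℕ) (φ : Fml) : (Fml.ex v φ).free = φ.free.erase v := rfl

lemma freeR (x y : ℕ) : (Fml.atom .R ![x,y]).free = {x, y} := by
  show Finset.image (![x,y] : Fin 2 → ℕ) Finset.univ = {x, y}
  ext v; simp [Fin.exists_fin_two, eq_comm]

lemma freeE (x y : ℕ) : (Fml.atom .E ![x,y]).free = {x, y} := by
  show Finset.image (![x,y] : Fin 2 → ℕ) Finset.univ = {x, y}
  ext v; simp [Fin.exists_fin_two, eq_comm]

lemma freeP (n m : ℕ) (x : ℕ) (g : Fin n → ℕ) :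
    (Fml.atom (.P n m) (Fin.cons x g)).free =
      insert x (Finset.univ.image fun j => g j) := by
  show Finset.image (Fin.cons x g : Fin (n+1) → ℕ) Finset.univ = _
  ext v
  simp only [Finset.mem_image, Finset.mem_univ, true_and, Finset.mem_insert]
  constructor
  · rintro ⟨j, rfl⟩
    refine Fin.cases ?_ ?_ j
    · left; rfl
    · intro j'; right; exact ⟨j', rfl⟩
  · rintro (rfl | ⟨j', -, rfl⟩)
    · exact ⟨0, rfl⟩
    · exact ⟨j'.succ, rfl⟩

lemma syms_eq (v w : ℕ) : (Fml.eq v w).syms = ∅ := rfl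
lemma syms_fls : (Fml.fls).syms = ∅ := rfl
lemma syms_neg (φ : Fml) : (Fml.neg φ).syms = φ.syms := rfl
lemma syms_conj (φ ψ : Fml) : (Fml.conj φ ψ).syms = φ.syms ∪ ψ.syms := rfl
lemma syms_disj (φ ψ : Fml) : (Fml.disj φ ψ).syms = φ.syms ∪ ψ.syms := rfl
lemma syms_impl (φ ψ : Fml) : (Fml.impl φ ψ).syms = φ.syms ∪ ψ.syms := rfl
lemma syms_all (v : ℕ) (φ : Fml) : (Fml.all v φ).syms = φ.syms := rfl
lemma syms_ex (v : ℕ) (φ : Fml) : (Fml.ex v φ).syms = φ.syms := rfl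
lemma symsR (x y : ℕ) : (Fml.atom .R ![x,y]).syms = {Sym.R} := rfl
lemma symsE (x y : ℕ) : (Fml.atom .E ![x,y]).syms = {Sym.E} := rfl
lemma symsP (n m x : ℕ) (g : Fin n → ℕ) :
    (Fml.atom (.P n m) (Fin.cons x g)).syms = {Sym.P n m} := rfl

lemma eval_eq (M : Model) (f : ℕ → M.D) (v w : ℕ) :
    (Fml.eq v w).eval M f ↔ f v = f w := Iff.rfl
lemma eval_fls (M : Model) (f : ℕ → M.D) : (Fml.fls).eval M f ↔ False := Iff.rfl
lemma eval_neg (M : Model) (f : ℕ → M.D) (φ : Fml) :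
    (Fml.neg φ).eval M f ↔ ¬ φ.eval M f := Iff.rfl
lemma eval_conj (M : Model) (f : ℕ → M.D) (φ ψ : Fml) :
    (Fml.conj φ ψ).eval M f ↔ φ.eval M f ∧ ψ.eval M f := Iff.rfl
lemma eval_disj (M : Model) (f : ℕ → M.D) (φ ψ : Fml) :
    (Fml.disj φ ψ).eval M f ↔ φ.eval M f ∨ ψ.eval M f := Iff.rfl
lemma eval_impl (M : Model) (f : ℕ → M.D) (φ ψ : Fml) :
    (Fml.impl φ ψ).eval M f ↔ (φ.eval M f → ψ.eval M f) := Iff.rfl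
lemma eval_all (M : Model) (f : ℕ → M.D) (v : ℕ) (φ : Fml) :
    (Fml.all v φ).eval M f ↔ ∀ d, φ.eval M (Function.update f v d) := Iff.rfl
lemma eval_ex (M : Model) (f : ℕ → M.D) (v : ℕ) (φ : Fml) :
    (Fml.ex v φ).eval M f ↔ ∃ d, φ.eval M (Function.update f v d) := Iff.rfl

lemma evalR (M : Model) (f : ℕ → M.D) (x y : ℕ) :
    (Fml.atom .R ![x,y]).eval M f ↔ relR M (f x) (f y) :=
  iff_of_eq (congrArg (M.rel .R) (vec2_eval f x y))

lemma evalE (M : Model) (f : ℕ → M.D) (x y : ℕ) :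
    (Fml.atom .E ![x,y]).eval M f ↔ relE M (f x) (f y) :=
  iff_of_eq (congrArg (M.rel .E) (vec2_eval f x y))

end IPC
namespace IPC

theorem Fml.eval_congr {M : Model} : ∀ (ψ : Fml) {f g : ℕ → M.D},
    (∀ v ∈ ψ.free, f v = g v) → (ψ.eval M f ↔ ψ.eval M g) := by
  intro ψ
  induction ψ with
  | atom s args =>
    intro f g h
    simp only [Fml.eval]
    have : (fun i => f (args i)) = fun i => g (args i) :=
      funext fun i => h _ (by simp [Fml.free])
    rw [this]
  | eq v w =>
    intro f g h
    simp [Fml.eval, h v (by simp [Fml.free]), h w (by simp [Fml.free])]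
  | fls => intro f g h; simp [Fml.eval]
  | neg φ ih => intro f g h; simp only [Fml.eval]; rw [ih h]
  | conj φ ψ ih1 ih2 =>
    intro f g h
    simp only [Fml.eval]
    rw [ih1 fun v hv => h v (by simp [Fml.free, hv]),
        ih2 fun v hv => h v (by simp [Fml.free, hv])]
  | disj φ ψ ih1 ih2 =>
    intro f g h
    simp only [Fml.eval]
    rw [ih1 fun v hv => h v (by simp [Fml.free, hv]),
        ih2 fun v hv => h v (by simp [Fml.free, hv])]
  | impl φ ψ ih1 ih2 =>
    intro f g h
    simp only [Fml.eval]
    rw [ih1 fun v hv => h v (by simp [Fml.free, hv]),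
        ih2 fun v hv => h v (by simp [Fml.free, hv])]
  | all v φ ih =>
    intro f g h
    simp only [Fml.eval]
    refine forall_congr' fun d => ih fun u hu => ?_
    by_cases huv : u = v
    · subst huv; simp [Function.update]
    · simp only [Function.update, huv, dif_neg]
      exact h u (Finset.mem_erase.2 ⟨huv, hu⟩)
  | ex v φ ih =>
    intro f g h
    simp only [Fml.eval]
    refine exists_congr fun d => ih fun u hu => ?_
    by_cases huv : u = v
    · subst huv; simp [Function.update]
    · simp only [Function.update, huv, dif_neg]
      exact h u (Finset.mem_erase.2 ⟨huv, hu⟩)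

/-- Free object variables of an intuitionistic formula. -/
def ifree : IFml → Finset ℕ
  | .atom _ _ args => Finset.univ.image args
  | .fls => ∅
  | .conj i j => ifree i ∪ ifree j
  | .disj i j => ifree i ∪ ifree j
  | .impl i j => ifree i ∪ ifree j
  | .all v i => (ifree i).erase v
  | .ex v i => (ifree i).erase v

theorem ST_free_subset : ∀ (i : IFml) (x : ℕ), x % 2 = 1 →
    (ST i x).free ⊆ insert x ((ifree i).image (fun j => 2 * j)) := by
  intro i
  induction i with
  | atom n m args =>
    intro x hx v hv
    rw [ST, freeP] at hv
    rcases Finset.mem_insert.1 hv with rfl | hv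
    · exact Finset.mem_insert_self _ _
    · rcases Finset.mem_image.1 hv with ⟨j, -, rfl⟩
      exact Finset.mem_insert.2 (Or.inr (Finset.mem_image.2 ⟨args j, by simp [ifree], rfl⟩))
  | fls =>
    intro x hx v hv
    simp only [ST, free_neg, free_eq, Finset.mem_insert, Finset.mem_singleton] at hv
    rcases hv with rfl | rfl <;> exact Finset.mem_insert_self _ _
  | conj i j ih1 ih2 =>
    intro x hx v hv
    simp only [ST, free_conj] at hv
    rcases Finset.mem_union.1 hv with hv | hv
    · rcases Finset.mem_insert.1 (ih1 x hx hv) with rfl | hv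
      · exact Finset.mem_insert_self _ _
      · rcases Finset.mem_image.1 hv with ⟨u, hu, rfl⟩
        exact Finset.mem_insert.2 (Or.inr (Finset.mem_image.2
          ⟨u, Finset.mem_union.2 (Or.inl hu), rfl⟩))
    · rcases Finset.mem_insert.1 (ih2 x hx hv) with rfl | hv
      · exact Finset.mem_insert_self _ _
      · rcases Finset.mem_image.1 hv with ⟨u, hu, rfl⟩
        exact Finset.mem_insert.2 (Or.inr (Finset.mem_image.2
          ⟨u, Finset.mem_union.2 (Or.inr hu), rfl⟩))
  | disj i j ih1 ih2 =>
    intro x hx v hv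
    simp only [ST, free_disj] at hv
    rcases Finset.mem_union.1 hv with hv | hv
    · rcases Finset.mem_insert.1 (ih1 x hx hv) with rfl | hv
      · exact Finset.mem_insert_self _ _
      · rcases Finset.mem_image.1 hv with ⟨u, hu, rfl⟩
        exact Finset.mem_insert.2 (Or.inr (Finset.mem_image.2
          ⟨u, Finset.mem_union.2 (Or.inl hu), rfl⟩))
    · rcases Finset.mem_insert.1 (ih2 x hx hv) with rfl | hv
      · exact Finset.mem_insert_self _ _
      · rcases Finset.mem_image.1 hv with ⟨u, hu, rfl⟩
        exact Finset.mem_insert.2 (Or.inr (Finset.mem_image.2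
          ⟨u, Finset.mem_union.2 (Or.inr hu), rfl⟩))
  | impl i j ih1 ih2 =>
    intro x hx v hv
    have hx2 : (x + 2) % 2 = 1 := by omega
    simp only [ST, free_all, free_impl, freeR] at hv
    rcases Finset.mem_erase.1 hv with ⟨hne, hv⟩
    rcases Finset.mem_union.1 hv with hv | hv
    · rcases Finset.mem_insert.1 hv with rfl | hv
      · exact Finset.mem_insert_self _ _
      · exact absurd (Finset.mem_singleton.1 hv) hne
    · rcases Finset.mem_union.1 hv with hv | hv
      · rcases Finset.mem_insert.1 (ih1 (x+2) hx2 hv) with rfl | hv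
        · exact absurd rfl hne
        · rcases Finset.mem_image.1 hv with ⟨u, hu, rfl⟩
          exact Finset.mem_insert.2 (Or.inr (Finset.mem_image.2
            ⟨u, Finset.mem_union.2 (Or.inl hu), rfl⟩))
      · rcases Finset.mem_insert.1 (ih2 (x+2) hx2 hv) with rfl | hv
        · exact absurd rfl hne
        · rcases Finset.mem_image.1 hv with ⟨u, hu, rfl⟩
          exact Finset.mem_insert.2 (Or.inr (Finset.mem_image.2
            ⟨u, Finset.mem_union.2 (Or.inr hu), rfl⟩))
  | all w i ih =>
    intro x hx v hv
    have hx2 : (x + 2) % 2 = 1 := by omega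
    simp only [ST, free_all, free_impl, free_conj, freeR, freeE] at hv
    rcases Finset.mem_erase.1 hv with ⟨hne2, hv⟩
    rcases Finset.mem_erase.1 hv with ⟨hnew, hv⟩
    rcases Finset.mem_union.1 hv with hv | hv
    · rcases Finset.mem_union.1 hv with hv | hv
      · rcases Finset.mem_insert.1 hv with rfl | hv
        · exact Finset.mem_insert_self _ _
        · exact absurd (Finset.mem_singleton.1 hv) hne2
      · rcases Finset.mem_insert.1 hv with rfl | hv
        · exact absurd rfl hne2
        · exact absurd (Finset.mem_singleton.1 hv) hnew
    · rcases Finset.mem_insert.1 (ih (x+2) hx2 hv) with rfl | hv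
      · exact absurd rfl hne2
      · rcases Finset.mem_image.1 hv with ⟨u, hu, rfl⟩
        refine Finset.mem_insert.2 (Or.inr (Finset.mem_image.2 ⟨u, ?_, rfl⟩))
        exact Finset.mem_erase.2 ⟨fun h => hnew (by rw [h]), hu⟩
  | ex w i ih =>
    intro x hx v hv
    simp only [ST, free_ex, free_conj, freeE] at hv
    rcases Finset.mem_erase.1 hv with ⟨hnew, hv⟩
    rcases Finset.mem_union.1 hv with hv | hv
    · rcases Finset.mem_insert.1 hv with rfl | hv
      · exact Finset.mem_insert_self _ _
      · exact absurd (Finset.mem_singleton.1 hv) hnew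
    · rcases Finset.mem_insert.1 (ih x hx hv) with rfl | hv
      · exact Finset.mem_insert_self _ _
      · rcases Finset.mem_image.1 hv with ⟨u, hu, rfl⟩
        refine Finset.mem_insert.2 (Or.inr (Finset.mem_image.2 ⟨u, ?_, rfl⟩))
        exact Finset.mem_erase.2 ⟨fun h => hnew (by rw [h]), hu⟩

theorem ST_syms : ∀ (i : IFml) (x y : ℕ), (ST i x).syms = (ST i y).syms := by
  intro i
  induction i with
  | atom n m args => intro x y; simp only [ST, symsP]
  | fls => intro x y; simp only [ST, syms_neg, syms_eq]
  | conj i j ih1 ih2 => intro x y; simp only [ST, syms_conj, ih1 x y, ih2 x y]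
  | disj i j ih1 ih2 => intro x y; simp only [ST, syms_disj, ih1 x y, ih2 x y]
  | impl i j ih1 ih2 =>
    intro x y
    simp only [ST, syms_all, syms_impl, symsR, ih1 (x+2) (y+2), ih2 (x+2) (y+2)]
  | all w i ih =>
    intro x y
    simp only [ST, syms_all, syms_impl, syms_conj, symsR, symsE, ih (x+2) (y+2)]
  | ex w i ih => intro x y; simp only [ST, syms_ex, syms_conj, symsE, ih x y]

theorem FreeOK_of_ifree {n : ℕ} {i : IFml} (h : ∀ j ∈ ifree i, j < n) :
    FreeOK n (ST i 1) := by
  intro v hv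
  rcases Finset.mem_insert.1 (ST_free_subset i 1 rfl hv) with rfl | hv
  · exact Or.inl rfl
  · rcases Finset.mem_image.1 hv with ⟨j, hj, rfl⟩
    exact Or.inr ⟨j, h j hj, rfl⟩

lemma upd_ne {D : Type} (f : ℕ → D) (a' : ℕ) (v : D) {a : ℕ} (h : a ≠ a') :
    Function.update f a' v a = f a := Function.update_of_ne h v f

lemma upd_same {D : Type} (f : ℕ → D) (a : ℕ) (v : D) :
    Function.update f a v a = v := Function.update_self a v f

theorem ST_relabel {M : Model} : ∀ (i : IFml) (x y : ℕ) (f g : ℕ → M.D),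
    x % 2 = 1 → y % 2 = 1 → f x = g y → (∀ j ∈ ifree i, f (2*j) = g (2*j)) →
    ((ST i x).eval M f ↔ (ST i y).eval M g) := by
  intro i
  induction i with
  | atom n m args =>
    intro x y f g hx hy hxy hobj
    simp only [ST, Fml.eval]
    have : (fun k => f ((Fin.cons x (fun j => 2 * args j) : Fin (n+1) → ℕ) k)) =
        (fun k => g ((Fin.cons y (fun j => 2 * args j) : Fin (n+1) → ℕ) k)) := by
      funext k
      refine Fin.cases ?_ ?_ k
      · exact hxy
      · intro j; exact hobj (args j) (by simp [ifree])
    exact iff_of_eq (congrArg (M.rel (.P n m)) this)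
  | fls =>
    intro x y f g hx hy hxy hobj
    simp [ST, Fml.eval]
  | conj i j ih1 ih2 =>
    intro x y f g hx hy hxy hobj
    simp only [ST, eval_conj]
    rw [ih1 x y f g hx hy hxy fun u hu => hobj u (Finset.mem_union.2 (Or.inl hu)),
        ih2 x y f g hx hy hxy fun u hu => hobj u (Finset.mem_union.2 (Or.inr hu))]
  | disj i j ih1 ih2 =>
    intro x y f g hx hy hxy hobj
    simp only [ST, eval_disj]
    rw [ih1 x y f g hx hy hxy fun u hu => hobj u (Finset.mem_union.2 (Or.inl hu)),
        ih2 x y f g hx hy hxy fun u hu => hobj u (Finset.mem_union.2 (Or.inr hu))]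
  | impl i j ih1 ih2 =>
    intro x y f g hx hy hxy hobj
    simp only [ST, eval_all, eval_impl]
    refine forall_congr' fun d => ?_
    rw [evalR M _ x (x+2), evalR M _ y (y+2)]
    rw [upd_ne f (x+2) d (show x ≠ x+2 by omega),
        upd_ne g (y+2) d (show y ≠ y+2 by omega),
        upd_same f (x+2) d, upd_same g (y+2) d, hxy]
    refine imp_congr Iff.rfl ?_
    have h1 : (x + 2) % 2 = 1 := by omega
    have h2 : (y + 2) % 2 = 1 := by omega
    have key : ∀ u ∈ ifree i ∪ ifree j,
        Function.update f (x+2) d (2*u) = Function.update g (y+2) d (2*u) := by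
      intro u hu
      rw [upd_ne f (x+2) d (by omega), upd_ne g (y+2) d (by omega)]
      exact hobj u hu
    have hxy2 : Function.update f (x+2) d (x+2) = Function.update g (y+2) d (y+2) := by
      rw [upd_same, upd_same]
    rw [ih1 (x+2) (y+2) (Function.update f (x+2) d) (Function.update g (y+2) d) h1 h2 hxy2
        (fun u hu => key u (Finset.mem_union.2 (Or.inl hu))),
      ih2 (x+2) (y+2) (Function.update f (x+2) d) (Function.update g (y+2) d) h1 h2 hxy2
        (fun u hu => key u (Finset.mem_union.2 (Or.inr hu)))]
  | all w i ih =>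
    intro x y f g hx hy hxy hobj
    simp only [ST, eval_all, eval_impl, eval_conj]
    refine forall_congr' fun d => forall_congr' fun e => ?_
    rw [evalR M _ x (x+2), evalR M _ y (y+2), evalE M _ (x+2) (2*w), evalE M _ (y+2) (2*w)]
    have h1 : (x + 2) % 2 = 1 := by omega
    have h2 : (y + 2) % 2 = 1 := by omega
    set f' := Function.update (Function.update f (x+2) d) (2*w) e with hf'
    set g' := Function.update (Function.update g (y+2) d) (2*w) e with hg'
    have hfx : f' x = f x := by
      rw [hf', upd_ne _ (2*w) e (by omega), upd_ne f (x+2) d (by omega)]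
    have hgy : g' y = g y := by
      rw [hg', upd_ne _ (2*w) e (by omega), upd_ne g (y+2) d (by omega)]
    have hfx2 : f' (x+2) = d := by
      rw [hf', upd_ne _ (2*w) e (by omega), upd_same f (x+2) d]
    have hgy2 : g' (y+2) = d := by
      rw [hg', upd_ne _ (2*w) e (by omega), upd_same g (y+2) d]
    have hfw : f' (2*w) = e := upd_same _ _ _
    have hgw : g' (2*w) = e := upd_same _ _ _
    rw [hfx, hgy, hfx2, hgy2, hfw, hgw, hxy]
    refine imp_congr Iff.rfl ?_
    refine ih (x+2) (y+2) f' g' h1 h2 (by rw [hfx2, hgy2]) ?_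
    intro u hu
    by_cases huw : u = w
    · subst huw; rw [hfw, hgw]
    · rw [hf', hg', upd_ne _ (2*w) e (by omega), upd_ne _ (2*w) e (by omega),
        upd_ne f (x+2) d (by omega), upd_ne g (y+2) d (by omega)]
      exact hobj u (Finset.mem_erase.2 ⟨huw, hu⟩)
  | ex w i ih =>
    intro x y f g hx hy hxy hobj
    simp only [ST, eval_ex, eval_conj]
    refine exists_congr fun d => ?_
    rw [evalE M _ x (2*w), evalE M _ y (2*w)]
    set f' := Function.update f (2*w) d with hf'
    set g' := Function.update g (2*w) d with hg'
    have hfx : f' x = f x := upd_ne f (2*w) d (by omega)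
    have hgy : g' y = g y := upd_ne g (2*w) d (by omega)
    have hfw : f' (2*w) = d := upd_same _ _ _
    have hgw : g' (2*w) = d := upd_same _ _ _
    rw [hfx, hgy, hfw, hgw, hxy]
    refine and_congr Iff.rfl ?_
    refine ih x y f' g' hx hy (by rw [hfx, hgy, hxy]) ?_
    intro u hu
    by_cases huw : u = w
    · subst huw; rw [hfw, hgw]
    · rw [hf', hg', upd_ne f (2*w) d (by omega), upd_ne g (2*w) d (by omega)]
      exact hobj u (Finset.mem_erase.2 ⟨huw, hu⟩)

end IPC
namespace IPC

/-! ### Pinned assignments and Sat -/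

noncomputable def pin (M : Model) (a : M.D) (bs : List M.D) : ℕ → M.D :=
  fun v => if v = 1 then a else bs.getD (v / 2) a

lemma pin_one (M : Model) (a : M.D) (bs : List M.D) : pin M a bs 1 = a := by simp [pin]

lemma pin_obj (M : Model) (a : M.D) (bs : List M.D) (i : Fin bs.length) :
    pin M a bs (2 * i.val) = bs.get i := by
  have h1 : 2 * i.val ≠ 1 := by omega
  have h2 : 2 * i.val / 2 = i.val := by omega
  rw [pin, if_neg h1, h2]
  exact List.getD_eq_get (l := bs) (d := a) i

lemma pin_obj' (M : Model) (a : M.D) (bs : List M.D) (j : ℕ) (hj : j < bs.length) :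
    pin M a bs (2 * j) = bs.get ⟨j, hj⟩ := pin_obj M a bs ⟨j, hj⟩

theorem sat_iff_eval {M : Model} {n : ℕ} {ψ : Fml} {a : M.D} {bs : List M.D}
    (hok : FreeOK n ψ) (hlen : bs.length = n) {g : ℕ → M.D}
    (hg1 : g 1 = a) (hg2 : ∀ i : Fin bs.length, g (2 * i.val) = bs.get i) :
    Sat M a bs ψ ↔ ψ.eval M g := by
  constructor
  · intro h; exact h g hg1 hg2
  · intro h f hf1 hf2
    refine (Fml.eval_congr ψ ?_).2 h
    intro v hv
    rcases hok v hv with rfl | ⟨i, hi, rfl⟩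
    · rw [hf1, hg1]
    · have hi' : i < bs.length := by omega
      rw [hf2 ⟨i, hi'⟩, hg2 ⟨i, hi'⟩]

theorem sat_iff_eval_pin {M : Model} {n : ℕ} {ψ : Fml} {a : M.D} {bs : List M.D}
    (hok : FreeOK n ψ) (hlen : bs.length = n) :
    Sat M a bs ψ ↔ ψ.eval M (pin M a bs) :=
  sat_iff_eval hok hlen (pin_one M a bs) (pin_obj M a bs)

/-! ### Finite conjunctions / disjunctions of intuitionistic formulas -/

def itop : IFml := .impl .fls .fls
def iconjL (L : List IFml) : IFml := L.foldr .conj itop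
def idisjL (L : List IFml) : IFml := L.foldr .disj .fls

lemma ifree_itop : ifree itop = ∅ := rfl
lemma ifree_ibot : ifree .fls = ∅ := rfl

lemma eval_ST_itop (M : Model) (f : ℕ → M.D) (x : ℕ) : (ST itop x).eval M f := by
  simp only [itop, ST, eval_all, eval_impl, eval_neg, eval_eq]
  exact fun d _ h => h


lemma eval_ST_ibot (M : Model) (f : ℕ → M.D) (x : ℕ) : ¬ (ST .fls x).eval M f := by
  simp [ST, eval_neg, eval_eq]

lemma eval_ST_iconjL (L : List IFml) (M : Model) (f : ℕ → M.D) (x : ℕ) :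
    (ST (iconjL L) x).eval M f ↔ ∀ i ∈ L, (ST i x).eval M f := by
  induction L with
  | nil => simp [iconjL, eval_ST_itop]
  | cons i L ih =>
    simp only [iconjL, List.foldr_cons, ST, eval_conj] at *
    rw [ih]
    simp [List.mem_cons]

lemma eval_ST_idisjL (L : List IFml) (M : Model) (f : ℕ → M.D) (x : ℕ) :
    (ST (idisjL L) x).eval M f ↔ ∃ i ∈ L, (ST i x).eval M f := by
  induction L with
  | nil => simp [idisjL, eval_ST_ibot M f x]
  | cons i L ih =>
    simp only [idisjL, List.foldr_cons, ST, eval_disj] at *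
    rw [ih]
    simp [List.mem_cons]

lemma ifree_iconjL (L : List IFml) : ∀ j ∈ ifree (iconjL L), ∃ i ∈ L, j ∈ ifree i := by
  induction L with
  | nil => intro j hj; simp [iconjL, itop, ifree] at hj
  | cons i L ih =>
    intro j hj
    simp only [iconjL, List.foldr_cons, ifree, Finset.mem_union] at hj
    rcases hj with hj | hj
    · exact ⟨i, List.mem_cons_self, hj⟩
    · rcases ih j hj with ⟨i', hi', hji'⟩
      exact ⟨i', List.mem_cons_of_mem _ hi', hji'⟩

lemma ifree_idisjL (L : List IFml) : ∀ j ∈ ifree (idisjL L), ∃ i ∈ L, j ∈ ifree i := by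
  induction L with
  | nil => intro j hj; simp [idisjL, ifree] at hj
  | cons i L ih =>
    intro j hj
    simp only [idisjL, List.foldr_cons, ifree, Finset.mem_union] at hj
    rcases hj with hj | hj
    · exact ⟨i, List.mem_cons_self, hj⟩
    · rcases ih j hj with ⟨i', hi', hji'⟩
      exact ⟨i', List.mem_cons_of_mem _ hi', hji'⟩

lemma RE_mem_sigOf (φ : Fml) : Sym.R ∈ sigOf φ ∧ Sym.E ∈ sigOf φ := by
  constructor <;> · simp [sigOf]

lemma syms_ST_itop (φ : Fml) : (ST itop 1).syms ⊆ sigOf φ := by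
  intro s hs
  simp only [itop, ST, syms_all, syms_impl, symsR, syms_neg, syms_eq] at hs
  simp only [Finset.union_empty, Finset.mem_singleton] at hs
  subst hs; exact (RE_mem_sigOf φ).1

lemma syms_ST_iconjL (φ : Fml) (L : List IFml) (h : ∀ i ∈ L, (ST i 1).syms ⊆ sigOf φ) :
    (ST (iconjL L) 1).syms ⊆ sigOf φ := by
  induction L with
  | nil => exact syms_ST_itop φ
  | cons i L ih =>
    intro s hs
    simp only [iconjL, List.foldr_cons, ST, syms_conj, Finset.mem_union] at hs
    rcases hs with hs | hs
    · exact h i (List.mem_cons_self) hs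
    · exact ih (fun i' hi' => h i' (List.mem_cons_of_mem _ hi')) hs

lemma syms_ST_idisjL (φ : Fml) (L : List IFml) (h : ∀ i ∈ L, (ST i 1).syms ⊆ sigOf φ) :
    (ST (idisjL L) 1).syms ⊆ sigOf φ := by
  induction L with
  | nil =>
    intro s hs
    simp only [idisjL, List.foldr_nil, ST, syms_neg, syms_eq] at hs
    exact absurd hs (Finset.notMem_empty s)
  | cons i L ih =>
    intro s hs
    simp only [idisjL, List.foldr_cons, ST, syms_disj, Finset.mem_union] at hs
    rcases hs with hs | hs
    · exact h i (List.mem_cons_self) hs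
    · exact ih (fun i' hi' => h i' (List.mem_cons_of_mem _ hi')) hs

/-! ### Good formulas -/

def Good (φ : Fml) (l : ℕ) (i : IFml) : Prop :=
  (ST i 1).syms ⊆ sigOf φ ∧ ∀ j ∈ ifree i, j < l

lemma Good_iconjL {φ : Fml} {l : ℕ} {L : List IFml} (h : ∀ i ∈ L, Good φ l i) :
    Good φ l (iconjL L) :=
  ⟨syms_ST_iconjL φ L fun i hi => (h i hi).1,
   fun j hj => by rcases ifree_iconjL L j hj with ⟨i, hi, hji⟩; exact (h i hi).2 j hji⟩

lemma Good_idisjL {φ : Fml} {l : ℕ} {L : List IFml} (h : ∀ i ∈ L, Good φ l i) :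
    Good φ l (idisjL L) :=
  ⟨syms_ST_idisjL φ L fun i hi => (h i hi).1,
   fun j hj => by rcases ifree_idisjL L j hj with ⟨i, hi, hji⟩; exact (h i hi).2 j hji⟩

lemma Good_impl {φ : Fml} {l : ℕ} {i j : IFml} (hi : Good φ l i) (hj : Good φ l j) :
    Good φ l (.impl i j) := by
  constructor
  · intro s hs
    simp only [ST, syms_all, syms_impl, symsR] at hs
    rcases Finset.mem_union.1 hs with hs | hs
    · rw [Finset.mem_singleton.1 hs]; exact (RE_mem_sigOf φ).1
    · rcases Finset.mem_union.1 hs with hs | hs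
      · exact hi.1 ((ST_syms i 1 (1+2)) ▸ hs)
      · exact hj.1 ((ST_syms j 1 (1+2)) ▸ hs)
  · intro u hu
    simp only [ifree, Finset.mem_union] at hu
    rcases hu with hu | hu
    · exact hi.2 u hu
    · exact hj.2 u hu

lemma Good_ex {φ : Fml} {l : ℕ} {i : IFml} (hi : Good φ (l+1) i) :
    Good φ l (.ex l i) := by
  constructor
  · intro s hs
    simp only [ST, syms_ex, syms_conj, symsE] at hs
    rcases Finset.mem_union.1 hs with hs | hs
    · rw [Finset.mem_singleton.1 hs]; exact (RE_mem_sigOf φ).2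
    · exact hi.1 hs
  · intro u hu
    simp only [ifree] at hu
    rcases Finset.mem_erase.1 hu with ⟨hne, hu⟩
    have := hi.2 u hu
    omega

lemma Good_all {φ : Fml} {l : ℕ} {i : IFml} (hi : Good φ (l+1) i) :
    Good φ l (.all l i) := by
  constructor
  · intro s hs
    simp only [ST, syms_all, syms_impl, syms_conj, symsR, symsE] at hs
    rcases Finset.mem_union.1 hs with hs | hs
    · rcases Finset.mem_union.1 hs with hs | hs
      · rw [Finset.mem_singleton.1 hs]; exact (RE_mem_sigOf φ).1
      · rw [Finset.mem_singleton.1 hs]; exact (RE_mem_sigOf φ).2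
    · exact hi.1 ((ST_syms i 1 (1+2)) ▸ hs)
  · intro u hu
    simp only [ifree] at hu
    rcases Finset.mem_erase.1 hu with ⟨hne, hu⟩
    have := hi.2 u hu
    omega

/-! ### conjList / exListF evaluation -/

lemma eval_conjList (L : List Fml) (M : Model) (f : ℕ → M.D) :
    (conjList L).eval M f ↔ ∀ ψ ∈ L, ψ.eval M f := by
  induction L with
  | nil => simp [conjList, eval_neg, eval_fls]
  | cons ψ L ih =>
    simp only [conjList, eval_conj, ih, List.mem_cons]
    constructor
    · rintro ⟨h1, h2⟩ χ (rfl | hχ)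
      exacts [h1, h2 χ hχ]
    · intro h
      exact ⟨h ψ (Or.inl rfl), fun χ hχ => h χ (Or.inr hχ)⟩

def exListF : List ℕ → Fml → Fml
  | [], ψ => ψ
  | v :: l, ψ => .ex v (exListF l ψ)

lemma eval_exListF : ∀ (l : List ℕ) (ψ : Fml) (M : Model) (f : ℕ → M.D),
    (exListF l ψ).eval M f ↔ ∃ g : ℕ → M.D, (∀ v, v ∉ l → g v = f v) ∧ ψ.eval M g := by
  intro l
  induction l with
  | nil =>
    intro ψ M f
    constructor
    · intro h; exact ⟨f, fun _ _ => rfl, h⟩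
    · rintro ⟨g, hg, h⟩
      exact (Fml.eval_congr ψ fun v _ => (hg v List.not_mem_nil).symm).2 h
  | cons v l ih =>
    intro ψ M f
    simp only [exListF, eval_ex]
    constructor
    · rintro ⟨d, hd⟩
      rcases (ih ψ M _).1 hd with ⟨g, hg, h⟩
      refine ⟨g, fun u hu => ?_, h⟩
      have huv : u ≠ v := fun h' => hu (h' ▸ (List.mem_cons_self (a := v) (l := l)))
      have hul : u ∉ l := fun h' => hu (List.mem_cons_of_mem _ h')
      rw [hg u hul, upd_ne f v d huv]
    · rintro ⟨g, hg, h⟩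
      refine ⟨g v, (ih ψ M _).2 ⟨g, fun u hu => ?_, h⟩⟩
      by_cases huv : u = v
      · subst huv; rw [upd_same]
      · rw [upd_ne f v (g v) huv]
        exact hg u (by simp [huv, hu])

end IPC
namespace IPC

/-! ### Countability of IFml -/

def enc : IFml → ℕ
  | .atom _ m args => Nat.pair 0 (Nat.pair m (Encodable.encode (List.ofFn args)))
  | .fls => Nat.pair 1 0
  | .conj i j => Nat.pair 2 (Nat.pair (enc i) (enc j))
  | .disj i j => Nat.pair 3 (Nat.pair (enc i) (enc j))
  | .impl i j => Nat.pair 4 (Nat.pair (enc i) (enc j))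
  | .all v i => Nat.pair 5 (Nat.pair v (enc i))
  | .ex v i => Nat.pair 6 (Nat.pair v (enc i))

theorem enc_inj : ∀ a b : IFml, enc a = enc b → a = b := by
  intro a
  induction a with
  | atom n m args =>
    intro b h
    cases b <;> simp [enc, Nat.pair_eq_pair, Encodable.encode_inj] at h
    case atom n' m' args' =>
    obtain ⟨hm, hlist⟩ := h
    have hn : n = n' := by
      have := congrArg List.length hlist
      simpa using this
    subst hn
    subst hm
    rw [List.ofFn_inj.1 hlist]
  | fls => intro b h; cases b <;> simp [enc, Nat.pair_eq_pair] at h ⊢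
  | conj i j ih1 ih2 =>
    intro b h
    cases b <;> simp [enc, Nat.pair_eq_pair] at h
    case conj i' j' =>
    rw [ih1 _ h.1, ih2 _ h.2]
  | disj i j ih1 ih2 =>
    intro b h
    cases b <;> simp [enc, Nat.pair_eq_pair] at h
    case disj i' j' =>
    rw [ih1 _ h.1, ih2 _ h.2]
  | impl i j ih1 ih2 =>
    intro b h
    cases b <;> simp [enc, Nat.pair_eq_pair] at h
    case impl i' j' =>
    rw [ih1 _ h.1, ih2 _ h.2]
  | all v i ih =>
    intro b h
    cases b <;> simp [enc, Nat.pair_eq_pair] at h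
    case all v' i' =>
    rw [h.1, ih _ h.2]
  | ex v i ih =>
    intro b h
    cases b <;> simp [enc, Nat.pair_eq_pair] at h
    case ex v' i' =>
    rw [h.1, ih _ h.2]

instance : Countable IFml := ⟨⟨enc, fun {a b} h => enc_inj a b h⟩⟩

instance : Nonempty IFml := ⟨.fls⟩

/-- A fixed surjective enumeration of intuitionistic formulas. -/
noncomputable def iEnum : ℕ → IFml := (exists_surjective_nat IFml).choose

lemma iEnum_surj : Function.Surjective iEnum := (exists_surjective_nat IFml).choose_spec

end IPC
namespace IPC

/-! ### Ultraproducts and Łoś's theorem -/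

section Ultra

variable {ι : Type} (U : Ultrafilter ι) (Ms : ι → Model)

def upSetoid : Setoid (∀ i, (Ms i).D) where
  r F G := ∀ᶠ i in U, F i = G i
  iseqv := by
    refine ⟨fun F => Filter.Eventually.of_forall fun _ => rfl, ?_, ?_⟩
    · intro F G h; exact h.mono fun i hi => hi.symm
    · intro F G H h1 h2; exact (h1.and h2).mono fun i ⟨hi1, hi2⟩ => hi1.trans hi2

noncomputable def UProd : Model where
  D := Quotient (upSetoid U Ms)
  ne := ⟨⟦fun i => (Ms i).ne.some⟧⟩
  rel := fun s v => ∀ᶠ i in U, (Ms i).rel s (fun j => (v j).out i)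

lemma up_out {F : ∀ i, (Ms i).D} :
    ∀ᶠ i in U, (Quotient.mk (upSetoid U Ms) F).out i = F i := by
  have h := @Quotient.exact _ (upSetoid U Ms) _ _ (Quotient.out_eq (Quotient.mk (upSetoid U Ms) F))
  exact h

lemma up_update (F : ℕ → ∀ i, (Ms i).D) (v : ℕ) (G : ∀ i, (Ms i).D) :
    Function.update (fun u => (⟦F u⟧ : Quotient (upSetoid U Ms))) v ⟦G⟧ =
      fun u => ⟦Function.update F v G u⟧ := by
  funext u
  by_cases huv : u = v
  · subst huv; rw [upd_same, Function.update_self]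
  · rw [upd_ne _ v _ huv]
    have : Function.update F v G u = F u := Function.update_of_ne huv _ _
    rw [this]

lemma update_comp_eval (F : ℕ → ∀ i, (Ms i).D) (v : ℕ)
    (G : ∀ i, (Ms i).D) (i : ι) :
    (fun u => Function.update F v G u i) = Function.update (fun u => F u i) v (G i) := by
  funext u
  by_cases huv : u = v
  · subst huv; rw [Function.update_self, Function.update_self]
  · rw [Function.update_of_ne huv, Function.update_of_ne huv]

theorem los : ∀ (ψ : Fml) (F : ℕ → ∀ i, (Ms i).D),
    (ψ.eval (UProd U Ms) (fun v => ⟦F v⟧) ↔ ∀ᶠ i in U, ψ.eval (Ms i) (fun v => F v i)) := by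
  intro ψ
  induction ψ with
  | atom s args =>
    intro F
    show (∀ᶠ i in U, (Ms i).rel s fun j => (Quotient.out ⟦F (args j)⟧ i)) ↔ _
    have hall : ∀ᶠ i in U, ∀ j : Fin s.arity,
        (Quotient.mk (upSetoid U Ms) (F (args j))).out i = F (args j) i :=
      (Filter.eventually_all).2 fun j => up_out U Ms
    refine Filter.eventually_congr (hall.mono fun i hi => ?_)
    constructor
    · intro h
      have : (fun j => (Quotient.mk (upSetoid U Ms) (F (args j))).out i) =
          fun j => F (args j) i := funext fun j => hi j
      rwa [this] at h
    · intro h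
      have : (fun j => (Quotient.mk (upSetoid U Ms) (F (args j))).out i) =
          fun j => F (args j) i := funext fun j => hi j
      rwa [this]
  | eq v w =>
    intro F
    show (⟦F v⟧ : Quotient (upSetoid U Ms)) = ⟦F w⟧ ↔ _
    exact Quotient.eq (r := upSetoid U Ms)
  | fls =>
    intro F
    refine ⟨False.elim, fun h => ?_⟩
    rcases h.exists with ⟨i, hi⟩
    exact hi
  | neg φ ih =>
    intro F
    simp only [Fml.eval]
    rw [Ultrafilter.eventually_not, ih F]
  | conj φ ψ ih1 ih2 =>
    intro F
    simp only [Fml.eval]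
    rw [Filter.eventually_and, ih1 F, ih2 F]
  | disj φ ψ ih1 ih2 =>
    intro F
    simp only [Fml.eval]
    rw [Ultrafilter.eventually_or, ih1 F, ih2 F]
  | impl φ ψ ih1 ih2 =>
    intro F
    simp only [Fml.eval]
    rw [Ultrafilter.eventually_imp, ih1 F, ih2 F]
  | all v φ ih =>
    intro F
    show (∀ d, φ.eval (UProd U Ms) (Function.update _ v d)) ↔ _
    constructor
    · intro h
      by_contra hno
      rw [← Ultrafilter.eventually_not] at hno
      have hch : ∀ᶠ i in U, ∃ d, ¬ φ.eval (Ms i) (Function.update (fun v => F v i) v d) := by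
        refine hno.mono fun i hi => ?_
        by_contra h2
        push_neg at h2
        exact hi fun d => h2 d
      classical
      set G : ∀ i, (Ms i).D := fun i =>
        if hh : ∃ d, ¬ φ.eval (Ms i) (Function.update (fun v => F v i) v d) then hh.choose
        else (Ms i).ne.some with hG
      have hGbad : ∀ᶠ i in U, ¬ φ.eval (Ms i) (Function.update (fun v => F v i) v (G i)) := by
        refine hch.mono fun i hi => ?_
        simp only [hG, dif_pos hi]; exact hi.choose_spec
      have := h ⟦G⟧
      erw [up_update U Ms F v G] at this
      rw [ih (Function.update F v G)] at this
      have hcontra : ∀ᶠ i in (U : Filter ι), False := by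
        refine (this.and hGbad).mono fun i ⟨h1, h2⟩ => h2 ?_
        rwa [update_comp_eval Ms F v G i] at h1
      rcases hcontra.exists with ⟨i, hi⟩
      exact hi
    · intro h d
      have hd : ⟦d.out⟧ = d := Quotient.out_eq d
      erw [← hd, up_update U Ms F v d.out, ih (Function.update F v d.out)]
      refine h.mono fun i hi => ?_
      rw [update_comp_eval Ms F v d.out i]
      exact hi (d.out i)
  | ex v φ ih =>
    intro F
    show (∃ d, φ.eval (UProd U Ms) (Function.update _ v d)) ↔ _
    constructor
    · rintro ⟨d, hd⟩
      have hdo : ⟦d.out⟧ = d := Quotient.out_eq d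
      erw [← hdo, up_update U Ms F v d.out, ih (Function.update F v d.out)] at hd
      refine hd.mono fun i hi => ⟨d.out i, ?_⟩
      rw [← update_comp_eval Ms F v d.out i]
      exact hi
    · intro h
      classical
      have h' : ∀ᶠ i in (U : Filter ι), ∃ d, φ.eval (Ms i) (Function.update (fun v => F v i) v d) :=
        h.mono fun i hi => hi
      set G : ∀ i, (Ms i).D := fun i =>
        if hh : ∃ d, φ.eval (Ms i) (Function.update (fun v => F v i) v d) then hh.choose
        else (Ms i).ne.some with hG
      refine ⟨⟦G⟧, ?_⟩
      erw [up_update U Ms F v G, ih (Function.update F v G)]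
      refine h'.mono fun i hi => ?_
      have hGi : φ.eval (Ms i) (Function.update (fun v => F v i) v (G i)) := by
        simp only [hG, dif_pos hi]; exact hi.choose_spec
      rwa [← update_comp_eval Ms F v G i] at hGi

end Ultra

end IPC
namespace IPC

/-! ### Compactness -/

theorem compactness (Γ : Set Fml)
    (hfin : ∀ S : Finset Fml, ↑S ⊆ Γ → ∃ (M : Model) (g : ℕ → M.D), ∀ ψ ∈ S, ψ.eval M g) :
    ∃ (M : Model) (g : ℕ → M.D), ∀ ψ ∈ Γ, ψ.eval M g := by
  classical
  let ι := {S : Finset Fml // ↑S ⊆ Γ}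
  haveI : Nonempty ι := ⟨⟨∅, by simp⟩⟩
  haveI : IsDirected ι (· ≤ ·) := ⟨fun a b =>
    ⟨⟨a.1 ∪ b.1, by
        intro ψ hψ
        rcases Finset.mem_union.1 hψ with h | h
        · exact a.2 h
        · exact b.2 h⟩,
      Finset.subset_union_left, Finset.subset_union_right⟩⟩
  haveI : (Filter.atTop : Filter ι).NeBot := Filter.atTop_neBot_iff.2 ⟨‹_›, ‹_›⟩
  let U : Ultrafilter ι := Ultrafilter.of Filter.atTop
  have hUle : (U : Filter ι) ≤ Filter.atTop := Ultrafilter.of_le _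
  let Ms : ι → Model := fun S => (hfin S.1 S.2).choose
  let gs : ∀ S : ι, ℕ → (Ms S).D := fun S => (hfin S.1 S.2).choose_spec.choose
  have hsat : ∀ S : ι, ∀ ψ ∈ S.1, ψ.eval (Ms S) (gs S) :=
    fun S => (hfin S.1 S.2).choose_spec.choose_spec
  refine ⟨UProd U Ms, fun v => ⟦fun S => gs S v⟧, ?_⟩
  intro ψ hψ
  rw [los U Ms ψ (fun v S => gs S v)]
  have hmem : {T : ι | (⟨{ψ}, by simpa using hψ⟩ : ι) ≤ T} ∈ Filter.atTop :=
    Filter.mem_atTop _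
  exact Filter.mem_of_superset (hUle hmem)
    (fun T hT => hsat T ψ (hT (Finset.mem_singleton_self ψ)))

/-! ### Ultrapowers: the diagonal embedding is elementary -/

lemma diag_eval (M : Model) (U : Ultrafilter ℕ) (ψ : Fml) (g : ℕ → M.D) :
    ψ.eval (UProd U (fun _ => M)) (fun v => ⟦fun _ => g v⟧) ↔ ψ.eval M g := by
  rw [los U (fun _ => M) ψ (fun v _ => g v)]
  exact Filter.eventually_const

/-! ### Realization of countable types in ultrapowers over `hyperfilter ℕ` -/

def RealizesSeq (M : Model) : Prop :=
  ∀ (f : ℕ → M.D) (V : List ℕ) (e : ℕ → Fml),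
    (∀ k : ℕ, ∃ g, (∀ v, v ∉ V → g v = f v) ∧ ∀ m ≤ k, (e m).eval M g) →
    ∃ g, (∀ v, v ∉ V → g v = f v) ∧ ∀ m, (e m).eval M g

noncomputable def hyU : Ultrafilter ℕ := Filter.hyperfilter ℕ

lemma hyU_le_cofinite : (hyU : Filter ℕ) ≤ Filter.cofinite := Filter.hyperfilter_le_cofinite

theorem up_realizesSeq (Ms : ℕ → Model) :
    RealizesSeq (UProd hyU Ms) := by
  classical
  intro f V e hfin
  set F : ℕ → ∀ i, (Ms i).D := fun v => (f v).out with hF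
  have hf : ∀ v, (⟦F v⟧ : (UProd hyU Ms).D) = f v := fun v => Quotient.out_eq _
  have hff : (fun v => (⟦F v⟧ : (UProd hyU Ms).D)) = f := funext hf
  set C : ℕ → Fml := fun k => exListF V (conjList ((List.range (k+1)).map e)) with hC
  have hCk : ∀ k, (C k).eval (UProd hyU Ms) f := by
    intro k
    rcases hfin k with ⟨g, hgV, hge⟩
    rw [hC]
    refine (eval_exListF V _ (UProd hyU Ms) f).2 ⟨g, hgV, ?_⟩
    rw [eval_conjList]
    intro ψ hψ
    rcases List.mem_map.1 hψ with ⟨m, hm, rfl⟩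
    have := List.mem_range.1 hm
    exact hge m (by omega)
  set P : ℕ → ℕ → Prop := fun i k => (C k).eval (Ms i) (fun v => F v i) with hP
  have hS : ∀ k, ∀ᶠ i in (hyU : Filter ℕ), P i k := by
    intro k
    have h := hCk k
    rw [← hff] at h
    exact (los hyU Ms (C k) F).1 h
  have hmono : ∀ i m k, m ≤ k → P i k → P i m := by
    intro i m k hmk h
    rw [hP] at h ⊢
    rw [hC] at h ⊢
    rcases (eval_exListF V _ _ _).1 h with ⟨g, hgV, hg⟩
    refine (eval_exListF V _ _ _).2 ⟨g, hgV, ?_⟩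
    rw [eval_conjList] at hg ⊢
    intro ψ hψ
    rcases List.mem_map.1 hψ with ⟨m', hm', rfl⟩
    have := List.mem_range.1 hm'
    exact hg _ (List.mem_map.2 ⟨m', List.mem_range.2 (by omega), rfl⟩)
  set K : ℕ → ℕ := fun i => Nat.findGreatest (fun k => P i k) i with hK
  set Hfun : ∀ i : ℕ, ℕ → (Ms i).D := fun i =>
    if hh : P i (K i) then ((eval_exListF V _ (Ms i) (fun v => F v i)).1 hh).choose
    else fun v => F v i with hH
  have hHoff : ∀ i v, v ∉ V → Hfun i v = F v i := by
    intro i v hv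
    rw [hH]
    by_cases hh : P i (K i)
    · simp only [dif_pos hh]
      exact ((eval_exListF V _ (Ms i) (fun v => F v i)).1 hh).choose_spec.1 v hv
    · simp only [dif_neg hh]
  have hHsat : ∀ i, P i (K i) → ∀ m ≤ K i, (e m).eval (Ms i) (Hfun i) := by
    intro i hh m hm
    have hspec := ((eval_exListF V _ (Ms i) (fun v => F v i)).1 hh).choose_spec.2
    rw [eval_conjList] at hspec
    have hmem : (e m) ∈ (List.range (K i + 1)).map e :=
      List.mem_map.2 ⟨m, List.mem_range.2 (by omega), rfl⟩
    have hres := hspec _ hmem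
    rw [hH]
    simp only [dif_pos hh]
    exact hres
  refine ⟨fun v => ⟦fun i => Hfun i v⟧, ?_, ?_⟩
  · intro v hv
    have h1 : (fun i => Hfun i v) = F v := funext fun i => hHoff i v hv
    exact (congrArg (Quotient.mk (upSetoid hyU Ms)) h1).trans (hf v)
  · intro m
    refine (los hyU Ms (e m) (fun v i => Hfun i v)).2 ?_
    have h1 : ∀ᶠ i in (hyU : Filter ℕ), m ≤ i := by
      have h2 : ∀ᶠ i in Filter.cofinite, m ≤ i := by
        rw [Nat.cofinite_eq_atTop]
        exact Filter.eventually_ge_atTop m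
      exact h2.filter_mono hyU_le_cofinite
    refine ((hS m).and h1).mono ?_
    intro i ⟨hPm, hmi⟩
    have hKm : m ≤ K i := Nat.le_findGreatest hmi hPm
    have hPK : P i (K i) := Nat.findGreatest_spec (P := fun k => P i k) hmi hPm
    exact hHsat i hPK m hKm

end IPC
namespace IPC

/-! ### SatI and pin lemmas -/

noncomputable def SatI (α : Model) (a : α.D) (os : List α.D) (i : IFml) : Prop :=
  (ST i 1).eval α (pin α a os)

lemma pin_getD (α : Model) (a : α.D) (os : List α.D) (j : ℕ) :
    pin α a os (2 * j) = os.getD j a := by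
  rw [pin, if_neg (by omega)]
  congr 1
  omega

lemma pin_default (α : Model) (a a' : α.D) (os : List α.D) (j : ℕ) (h : j < os.length) :
    pin α a os (2 * j) = pin α a' os (2 * j) := by
  rw [pin_getD, pin_getD, List.getD_eq_getElem _ _ h, List.getD_eq_getElem _ _ h]

lemma pin_append_lt (α : Model) (a : α.D) (os : List α.D) (b : α.D) (j : ℕ)
    (h : j < os.length) : pin α a (os ++ [b]) (2 * j) = pin α a os (2 * j) := by
  rw [pin_getD, pin_getD]
  exact List.getD_append _ _ _ _ h

lemma pin_append_last (α : Model) (a : α.D) (os : List α.D) (b : α.D) :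
    pin α a (os ++ [b]) (2 * os.length) = b := by
  rw [pin_getD]
  rw [List.getD_append_right _ _ _ _ (le_refl _)]
  simp

lemma eval_ST_pin (α : Model) (a : α.D) (os : List α.D) (i : IFml) (x : ℕ)
    (hx : x % 2 = 1) (f : ℕ → α.D) (hfx : f x = a)
    (hobj : ∀ j ∈ ifree i, f (2*j) = pin α a os (2*j)) :
    ((ST i x).eval α f ↔ SatI α a os i) :=
  ST_relabel i x 1 f (pin α a os) hx rfl (by rw [hfx, pin_one]) hobj

lemma sat_iff_satI {α : Model} {n : ℕ} {i : IFml} {a : α.D} {os : List α.D}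
    (hok : FreeOK n (ST i 1)) (hlen : os.length = n) :
    Sat α a os (ST i 1) ↔ SatI α a os i :=
  sat_iff_eval_pin hok hlen

/-! ### The atom correspondence -/

lemma atomSat_P_iff (α : Model) (a : α.D) (os : List α.D) (m : ℕ) :
    atomSat α (.P os.length m) a os ↔ SatI α a os (.atom os.length m (fun j => j.val)) := by
  have harity : (Sym.P os.length m).arity = os.length + 1 := rfl
  have hfun : ∀ h : (Sym.P os.length m).arity = os.length + 1,
      (fun k => pin α a os ((Fin.cons 1 (fun j : Fin os.length => 2 * (j : ℕ)) :
          Fin (os.length + 1) → ℕ) k)) =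
        fun k => (a :: os).get (Fin.cast h k) := by
    intro h
    funext k
    refine Fin.cases ?_ ?_ k
    · rw [Fin.cons_zero, pin_one]
      rfl
    · intro j
      rw [Fin.cons_succ, pin_getD, List.getD_eq_getElem _ _ j.isLt]
      have : (Fin.cast h j.succ : Fin (os.length + 1)).val = j.val + 1 := rfl
      simp [List.get_eq_getElem, this]
  have hiff := iff_of_eq (congrArg (α.rel (.P os.length m)) (hfun harity))
  constructor
  · rintro ⟨h, hrel⟩
    exact hiff.2 hrel
  · intro hsat
    exact ⟨harity, hiff.1 hsat⟩

lemma atomSat_P_iff' (α : Model) (a : α.D) (os : List α.D) (n m : ℕ) (hn : n = os.length) :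
    atomSat α (.P n m) a os ↔ SatI α a os (.atom n m (fun j => j.val)) := by
  subst hn
  exact atomSat_P_iff α a os m

lemma Good_atom (φ : Fml) (l m : ℕ) (hP : Sym.P l m ∈ sigOf φ) :
    Good φ l (.atom l m (fun j => j.val)) := by
  constructor
  · intro s hs
    rw [ST, symsP] at hs
    rw [Finset.mem_singleton.1 hs]
    exact hP
  · intro j hj
    rw [ifree] at hj
    rcases Finset.mem_image.1 hj with ⟨k, -, rfl⟩
    exact k.isLt

end IPC
namespace IPC

lemma satI_def (α : Model) (a : α.D) (os : List α.D) (i : IFml) :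
    SatI α a os i ↔ (ST i 1).eval α (pin α a os) := Iff.rfl

lemma satI_iconjL (α : Model) (a : α.D) (os : List α.D) (L : List IFml) :
    SatI α a os (iconjL L) ↔ ∀ i ∈ L, SatI α a os i := eval_ST_iconjL L α (pin α a os) 1

lemma satI_idisjL (α : Model) (a : α.D) (os : List α.D) (L : List IFml) :
    SatI α a os (idisjL L) ↔ ∃ i ∈ L, SatI α a os i := eval_ST_idisjL L α (pin α a os) 1

lemma eval_ST_upd3 (α : Model) (a y : α.D) (os : List α.D) (i : IFml)
    (hl : ∀ j ∈ ifree i, j < os.length) :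
    ((ST i 3).eval α (Function.update (pin α a os) 3 y) ↔ SatI α y os i) := by
  refine eval_ST_pin α y os i 3 rfl _ (upd_same _ _ _) ?_
  intro j hj
  rw [upd_ne _ _ _ (by omega), pin_default α a y os j (hl j hj)]

lemma eval_ST_upd3l (α : Model) (a y z : α.D) (os : List α.D) (i : IFml)
    (hl : ∀ j ∈ ifree i, j < os.length + 1) :
    ((ST i 3).eval α (Function.update (Function.update (pin α a os) 3 y) (2 * os.length) z)
      ↔ SatI α y (os ++ [z]) i) := by
  refine eval_ST_pin α y (os ++ [z]) i 3 rfl _ ?_ ?_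
  · rw [upd_ne _ _ _ (by omega), upd_same]
  · intro j hj
    by_cases hjl : j = os.length
    · subst hjl; rw [upd_same, pin_append_last]
    · have hjlt : j < os.length := by have := hl j hj; omega
      rw [upd_ne _ _ _ (by omega), upd_ne _ _ _ (by omega), pin_append_lt _ _ _ _ _ hjlt,
        pin_default α a y os j hjlt]

lemma eval_ST_updl (α : Model) (a z : α.D) (os : List α.D) (i : IFml)
    (hl : ∀ j ∈ ifree i, j < os.length + 1) :
    ((ST i 1).eval α (Function.update (pin α a os) (2 * os.length) z)
      ↔ SatI α a (os ++ [z]) i) := by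
  refine eval_ST_pin α a (os ++ [z]) i 1 rfl _
    (by rw [upd_ne _ _ _ (by omega), pin_one]) ?_
  intro j hj
  by_cases hjl : j = os.length
  · subst hjl; rw [upd_same, pin_append_last]
  · have hjlt : j < os.length := by have := hl j hj; omega
    rw [upd_ne _ _ _ (by omega), pin_append_lt _ _ _ _ _ hjlt]

lemma eval_ST_g3 (α : Model) (a : α.D) (os : List α.D) (g : ℕ → α.D)
    (hg : ∀ v, v ∉ ([3] : List ℕ) → g v = pin α a os v) (i : IFml)
    (hl : ∀ j ∈ ifree i, j < os.length) :
    ((ST i 3).eval α g ↔ SatI α (g 3) os i) := by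
  refine eval_ST_pin α (g 3) os i 3 rfl g rfl ?_
  intro j hj
  rw [hg (2*j) (by simp; omega), pin_default α a (g 3) os j (hl j hj)]

lemma eval_ST_g3l (α : Model) (a : α.D) (os : List α.D) (g : ℕ → α.D)
    (hg : ∀ v, v ∉ ([3, 2 * os.length] : List ℕ) → g v = pin α a os v) (i : IFml)
    (hl : ∀ j ∈ ifree i, j < os.length + 1) :
    ((ST i 3).eval α g ↔ SatI α (g 3) (os ++ [g (2 * os.length)]) i) := by
  refine eval_ST_pin α (g 3) (os ++ [g (2 * os.length)]) i 3 rfl g rfl ?_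
  intro j hj
  by_cases hjl : j = os.length
  · subst hjl; rw [pin_append_last]
  · have hjlt : j < os.length := by have := hl j hj; omega
    rw [hg (2*j) (by simp; omega), pin_append_lt _ _ _ _ _ hjlt,
      pin_default α a (g 3) os j hjlt]

lemma eval_ST_g1l (α : Model) (c : α.D) (ds : List α.D) (g : ℕ → α.D)
    (hg : ∀ v, v ∉ ([2 * ds.length] : List ℕ) → g v = pin α c ds v) (i : IFml)
    (hl : ∀ j ∈ ifree i, j < ds.length + 1) :
    ((ST i 1).eval α g ↔ SatI α c (ds ++ [g (2 * ds.length)]) i) := by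
  refine eval_ST_pin α c (ds ++ [g (2 * ds.length)]) i 1 rfl g
    (by rw [hg 1 (by simp; omega), pin_one]) ?_
  intro j hj
  by_cases hjl : j = ds.length
  · subst hjl; rw [pin_append_last]
  · have hjlt : j < ds.length := by have := hl j hj; omega
    rw [hg (2*j) (by simp; omega), pin_append_lt _ _ _ _ _ hjlt]

/-- The inclusion-of-intuitionistic-theories relation between evaluation points. -/
def ITLrel (φ : Fml) (M N : Model) :
    ∀ s t : Bool, (side M N s).D → List (side M N s).D →
      (side M N t).D → List (side M N t).D → Prop :=
  fun s t a os c ds =>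
    os.length = ds.length ∧
    ∀ i : IFml, Good φ os.length i →
      SatI (side M N s) a os i → SatI (side M N t) c ds i

theorem ITL_isAsim (φ : Fml) (M N : Model) (hM : RealizesSeq M) (hN : RealizesSeq N) :
    IsAsim (↑(sigOf φ)) M N (ITLrel φ M N) := by
  classical
  have hside : ∀ s : Bool, RealizesSeq (side M N s) := by
    intro s; cases s
    · exact hN
    · exact hM
  have h31 : (3 : ℕ) % 2 = 1 := rfl
  have hadd : (1 : ℕ) + 2 = 3 := rfl
  refine ⟨?_, ?_, ?_, ?_, ?_⟩
  -- lengths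
  · intro s t a os c ds h; exact h.1
  -- atoms
  · intro s t a os c ds hA P hP hPR hPE hsat
    rcases id hsat with ⟨harr, -⟩
    cases P with
    | R => exact absurd rfl hPR
    | E => exact absurd rfl hPE
    | P n m =>
      have hn : n = os.length := by
        have : n + 1 = os.length + 1 := harr
        omega
      have hPmem : Sym.P n m ∈ sigOf φ := hP
      have h1 := (atomSat_P_iff' (side M N s) a os n m hn).1 hsat
      have hgood : Good φ os.length (.atom n m (fun j => j.val)) := hn ▸ Good_atom φ n m hPmem
      have h2 := hA.2 _ hgood h1
      exact (atomSat_P_iff' (side M N t) c ds n m (hn.trans hA.1)).2 h2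
  -- back
  · intro s t a os c ds hA c'' hRc
    have hlen := hA.1
    set f₀ := pin (side M N s) a os with hf₀
    set e : ℕ → Fml := fun k =>
      if k = 0 then .atom .R ![1, 3]
      else
        if Good φ os.length (iEnum (k-1)) then
          (if SatI (side M N t) c'' ds (iEnum (k-1)) then ST (iEnum (k-1)) 3
           else .neg (ST (iEnum (k-1)) 3))
        else .atom .R ![1, 3] with he
    have he0 : e 0 = .atom .R ![1, 3] := rfl
    have heS : ∀ k', e (k'+1) =
        if Good φ os.length (iEnum k') then
          (if SatI (side M N t) c'' ds (iEnum k') then ST (iEnum k') 3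
           else .neg (ST (iEnum k') 3))
        else .atom .R ![1, 3] := fun k' => rfl
    have hfin : ∀ k : ℕ, ∃ g, (∀ v, v ∉ ([3] : List ℕ) → g v = f₀ v) ∧
        ∀ m ≤ k, (e m).eval (side M N s) g := by
      intro k
      set Lall := (List.range (k+1)).map iEnum with hLall
      set Lpos := Lall.filter
        (fun i => Good φ os.length i ∧ SatI (side M N t) c'' ds i) with hLpos
      set Lneg := Lall.filter
        (fun i => Good φ os.length i ∧ ¬ SatI (side M N t) c'' ds i) with hLneg
      have hposMem : ∀ i ∈ Lpos, Good φ os.length i ∧ SatI (side M N t) c'' ds i := by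
        intro i hi
        rw [hLpos, List.mem_filter] at hi
        simpa using hi.2
      have hnegMem : ∀ i ∈ Lneg, Good φ os.length i ∧ ¬ SatI (side M N t) c'' ds i := by
        intro i hi
        rw [hLneg, List.mem_filter] at hi
        simpa using hi.2
      have hkey : ∃ y, relR (side M N s) a y ∧
          (ST (iconjL Lpos) 3).eval (side M N s) (Function.update f₀ 3 y) ∧
          ¬ (ST (idisjL Lneg) 3).eval (side M N s) (Function.update f₀ 3 y) := by
        by_contra hno
        push_neg at hno
        have hGoodImpl : Good φ os.length (.impl (iconjL Lpos) (idisjL Lneg)) :=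
          Good_impl (Good_iconjL (fun i hi => (hposMem i hi).1))
            (Good_idisjL (fun i hi => (hnegMem i hi).1))
        have hSat : SatI (side M N s) a os (.impl (iconjL Lpos) (idisjL Lneg)) := by
          rw [satI_def]
          simp only [ST, eval_all, eval_impl, hadd]
          intro d hR hIp
          rw [evalR, upd_ne _ _ _ (by omega), pin_one, upd_same] at hR
          exact hno d hR hIp
        have h2 := hA.2 _ hGoodImpl hSat
        rw [satI_def] at h2
        simp only [ST, eval_all, eval_impl, hadd] at h2
        have h3 := h2 c''
        rw [evalR, upd_ne _ _ _ (by omega), pin_one, upd_same] at h3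
        have hIp : (ST (iconjL Lpos) 3).eval (side M N t)
            (Function.update (pin (side M N t) c ds) 3 c'') := by
          refine (eval_ST_upd3 (side M N t) c c'' ds _ ?_).2 ?_
          · intro j hj
            have := (Good_iconjL (fun i hi => (hposMem i hi).1) : Good φ os.length _).2 j hj
            omega
          · rw [satI_iconjL]
            exact fun i hi => (hposMem i hi).2
        have h4 := h3 hRc hIp
        have h5 : SatI (side M N t) c'' ds (idisjL Lneg) := by
          refine (eval_ST_upd3 (side M N t) c c'' ds _ ?_).1 h4
          intro j hj
          have := (Good_idisjL (fun i hi => (hnegMem i hi).1) : Good φ os.length _).2 j hj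
          omega
        rw [satI_idisjL] at h5
        rcases h5 with ⟨i, hi, hSi⟩
        exact (hnegMem i hi).2 hSi
      rcases hkey with ⟨y, hy1, hy2, hy3⟩
      refine ⟨Function.update f₀ 3 y, fun v hv => upd_ne _ _ _ (by simpa using hv), ?_⟩
      intro m hm
      cases m with
      | zero =>
        rw [he0, evalR, upd_ne _ _ _ (by omega), hf₀, pin_one, upd_same]
        exact hy1
      | succ m' =>
        rw [heS m']
        have hmem : iEnum m' ∈ Lall := by
          rw [hLall]
          exact List.mem_map.2 ⟨m', List.mem_range.2 (by omega), rfl⟩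
        by_cases hgood : Good φ os.length (iEnum m')
        · rw [if_pos hgood]
          by_cases hsi : SatI (side M N t) c'' ds (iEnum m')
          · rw [if_pos hsi]
            have hiL : iEnum m' ∈ Lpos := by
              rw [hLpos, List.mem_filter]
              exact ⟨hmem, by simp [hgood, hsi]⟩
            exact (eval_ST_iconjL Lpos (side M N s) _ 3).1 hy2 _ hiL
          · rw [if_neg hsi]
            intro hcon
            have hiL : iEnum m' ∈ Lneg := by
              rw [hLneg, List.mem_filter]
              exact ⟨hmem, by simp [hgood, hsi]⟩
            exact hy3 ((eval_ST_idisjL Lneg (side M N s) _ 3).2 ⟨iEnum m', hiL, hcon⟩)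
        · rw [if_neg hgood]
          rw [evalR, upd_ne _ _ _ (by omega), hf₀, pin_one, upd_same]
          exact hy1
    rcases hside s f₀ [3] e hfin with ⟨g, hgoff, hgall⟩
    have hg1 : g 1 = a := by rw [hgoff 1 (by simp), hf₀, pin_one]
    have hra : relR (side M N s) a (g 3) := by
      have h0 := hgall 0
      rw [he0, evalR, hg1] at h0
      exact h0
    refine ⟨g 3, hra, ⟨hlen.symm, ?_⟩, ⟨hlen, ?_⟩⟩
    · intro i hgood hSatt
      obtain ⟨k, rfl⟩ := iEnum_surj i
      have hgood' : Good φ os.length (iEnum k) := by rw [hlen]; exact hgood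
      have h := hgall (k+1)
      rw [heS k, if_pos hgood', if_pos hSatt] at h
      exact (eval_ST_g3 (side M N s) a os g hgoff _ hgood'.2).1 h
    · intro i hgood hSats
      obtain ⟨k, rfl⟩ := iEnum_surj i
      by_contra hnot
      have h := hgall (k+1)
      rw [heS k, if_pos hgood, if_neg hnot] at h
      exact h ((eval_ST_g3 (side M N s) a os g hgoff _ hgood.2).2 hSats)
  -- exi
  · intro s t a os c ds hA b'' hEb
    have hlen := hA.1
    set f₀ := pin (side M N t) c ds with hf₀
    set e : ℕ → Fml := fun k =>
      if Good φ (os.length + 1) (iEnum k) ∧ SatI (side M N s) a (os ++ [b'']) (iEnum k) then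
        .conj (.atom .E ![1, 2 * ds.length]) (ST (iEnum k) 1)
      else .atom .E ![1, 2 * ds.length] with he
    have hfin : ∀ k : ℕ, ∃ g, (∀ v, v ∉ ([2 * ds.length] : List ℕ) → g v = f₀ v) ∧
        ∀ m ≤ k, (e m).eval (side M N t) g := by
      intro k
      set Lall := (List.range (k+1)).map iEnum with hLall
      set Lpos := Lall.filter
        (fun i => Good φ (os.length + 1) i ∧ SatI (side M N s) a (os ++ [b'']) i) with hLpos
      have hposMem : ∀ i ∈ Lpos,
          Good φ (os.length + 1) i ∧ SatI (side M N s) a (os ++ [b'']) i := by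
        intro i hi
        rw [hLpos, List.mem_filter] at hi
        simpa using hi.2
      have hgoodJ : Good φ (os.length + 1) (iconjL Lpos) :=
        Good_iconjL (fun i hi => (hposMem i hi).1)
      have hgoodEx : Good φ os.length (.ex os.length (iconjL Lpos)) := Good_ex hgoodJ
      have hSatEx : SatI (side M N s) a os (.ex os.length (iconjL Lpos)) := by
        rw [satI_def]
        simp only [ST, eval_ex, eval_conj]
        refine ⟨b'', ?_, ?_⟩
        · rw [evalE, upd_ne _ _ _ (by omega), pin_one, upd_same]
          exact hEb
        · refine (eval_ST_updl (side M N s) a b'' os _ hgoodJ.2).2 ?_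
          rw [satI_iconjL]
          exact fun i hi => (hposMem i hi).2
      have h2 := hA.2 _ hgoodEx hSatEx
      rw [satI_def] at h2
      simp only [ST, eval_ex, eval_conj] at h2
      rcases h2 with ⟨d, hEd, hJd⟩
      rw [evalE, upd_ne _ _ _ (by omega), pin_one, upd_same] at hEd
      rw [hlen] at hJd
      have hJbound : ∀ j ∈ ifree (iconjL Lpos), j < ds.length + 1 := by
        intro j hj
        have := hgoodJ.2 j hj
        omega
      have hJd' : SatI (side M N t) c (ds ++ [d]) (iconjL Lpos) :=
        (eval_ST_updl (side M N t) c d ds _ hJbound).1 hJd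
      refine ⟨Function.update f₀ (2 * ds.length) d,
        fun v hv => upd_ne _ _ _ (by simpa using hv), ?_⟩
      intro m hm
      simp only [he]
      by_cases hc : Good φ (os.length + 1) (iEnum m) ∧
          SatI (side M N s) a (os ++ [b'']) (iEnum m)
      · rw [if_pos hc, eval_conj]
        constructor
        · rw [evalE, upd_ne _ _ _ (by omega), hf₀, pin_one, upd_same]
          exact hEd
        · have hmem : iEnum m ∈ Lpos := by
            rw [hLpos, List.mem_filter]
            exact ⟨List.mem_map.2 ⟨m, List.mem_range.2 (by omega), rfl⟩, by simp [hc.1, hc.2]⟩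
          have hSatm : SatI (side M N t) c (ds ++ [d]) (iEnum m) :=
            (satI_iconjL (side M N t) c (ds ++ [d]) Lpos).1 hJd' _ hmem
          have hbm : ∀ j ∈ ifree (iEnum m), j < ds.length + 1 := by
            intro j hj
            have := hc.1.2 j hj
            omega
          rw [hf₀]
          exact (eval_ST_updl (side M N t) c d ds _ hbm).2 hSatm
      · rw [if_neg hc]
        rw [evalE, upd_ne _ _ _ (by omega), hf₀, pin_one, upd_same]
        exact hEd
    rcases hside t f₀ [2 * ds.length] e hfin with ⟨g, hgoff, hgall⟩
    have hg1 : g 1 = c := by rw [hgoff 1 (by simp; omega), hf₀, pin_one]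
    have hEd'' : relE (side M N t) c (g (2 * ds.length)) := by
      have h0 := hgall 0
      simp only [he] at h0
      split_ifs at h0 with hc
      · rw [eval_conj] at h0
        have h1 := h0.1
        rw [evalE, hg1] at h1
        exact h1
      · rw [evalE, hg1] at h0
        exact h0
    refine ⟨g (2 * ds.length), hEd'', ⟨by simp [hlen], ?_⟩⟩
    intro i hgood hSat
    have hlen1 : (os ++ [b'']).length = os.length + 1 := by simp
    rw [hlen1] at hgood
    obtain ⟨k, rfl⟩ := iEnum_surj i
    have h := hgall k
    simp only [he] at h
    rw [if_pos (show Good φ (os.length + 1) (iEnum k) ∧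
        SatI (side M N s) a (os ++ [b'']) (iEnum k) from ⟨hgood, hSat⟩), eval_conj] at h
    have hbk : ∀ j ∈ ifree (iEnum k), j < ds.length + 1 := by
      intro j hj
      have := hgood.2 j hj
      omega
    exact (eval_ST_g1l (side M N t) c ds g hgoff _ hbk).1 h.2
  -- uni
  · intro s t a' os c' ds hA c'' d'' hRc hEd
    have hlen := hA.1
    set f₀ := pin (side M N s) a' os with hf₀
    set e : ℕ → Fml := fun k =>
      if k = 0 then .atom .R ![1, 3]
      else if k = 1 then .atom .E ![3, 2 * os.length]
      else
        if Good φ (os.length + 1) (iEnum (k-2)) ∧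
            ¬ SatI (side M N t) c'' (ds ++ [d'']) (iEnum (k-2)) then
          .neg (ST (iEnum (k-2)) 3)
        else .atom .R ![1, 3] with he
    have he0 : e 0 = .atom .R ![1, 3] := rfl
    have he1 : e 1 = .atom .E ![3, 2 * os.length] := rfl
    have heS : ∀ k', e (k'+2) =
        if Good φ (os.length + 1) (iEnum k') ∧
            ¬ SatI (side M N t) c'' (ds ++ [d'']) (iEnum k') then
          .neg (ST (iEnum k') 3)
        else .atom .R ![1, 3] := fun k' => rfl
    have hfin : ∀ k : ℕ, ∃ g, (∀ v, v ∉ ([3, 2 * os.length] : List ℕ) → g v = f₀ v) ∧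
        ∀ m ≤ k, (e m).eval (side M N s) g := by
      intro k
      set Lall := (List.range (k+1)).map iEnum with hLall
      set Lneg := Lall.filter
        (fun i => Good φ (os.length + 1) i ∧
            ¬ SatI (side M N t) c'' (ds ++ [d'']) i) with hLneg
      have hnegMem : ∀ i ∈ Lneg, Good φ (os.length + 1) i ∧
          ¬ SatI (side M N t) c'' (ds ++ [d'']) i := by
        intro i hi
        rw [hLneg, List.mem_filter] at hi
        simpa using hi.2
      have hgoodJ : Good φ (os.length + 1) (idisjL Lneg) :=
        Good_idisjL (fun i hi => (hnegMem i hi).1)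
      have hgoodAll : Good φ os.length (.all os.length (idisjL Lneg)) := Good_all hgoodJ
      have hkey : ∃ y z, relR (side M N s) a' y ∧ relE (side M N s) y z ∧
          ¬ (ST (idisjL Lneg) 3).eval (side M N s)
            (Function.update (Function.update f₀ 3 y) (2 * os.length) z) := by
        by_contra hno
        push_neg at hno
        have hSatAll : SatI (side M N s) a' os (.all os.length (idisjL Lneg)) := by
          rw [satI_def]
          simp only [ST, eval_all, eval_impl, eval_conj, hadd]
          intro y z hyz
          obtain ⟨hR', hE'⟩ := hyz
          rw [evalR, upd_ne _ _ _ (by omega), upd_ne _ _ _ (by omega), pin_one,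
            upd_ne _ _ _ (by omega), upd_same] at hR'
          rw [evalE, upd_ne _ _ _ (by omega), upd_same, upd_same] at hE'
          exact hno y z hR' hE'
        have h2 := hA.2 _ hgoodAll hSatAll
        rw [satI_def] at h2
        simp only [ST, eval_all, eval_impl, eval_conj, hadd] at h2
        have h3 := h2 c'' d''
        rw [hlen] at h3
        have hpre1 : (Fml.atom .R ![1, 3]).eval (side M N t)
            (Function.update (Function.update (pin (side M N t) c' ds) 3 c'')
              (2 * ds.length) d'') := by
          rw [evalR, upd_ne _ _ _ (by omega), upd_ne _ _ _ (by omega), pin_one,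
            upd_ne _ _ _ (by omega), upd_same]
          exact hRc
        have hpre2 : (Fml.atom .E ![3, 2 * ds.length]).eval (side M N t)
            (Function.update (Function.update (pin (side M N t) c' ds) 3 c'')
              (2 * ds.length) d'') := by
          rw [evalE, upd_ne _ _ _ (by omega), upd_same, upd_same]
          exact hEd
        have h4 := h3 ⟨hpre1, hpre2⟩
        have hbJ : ∀ j ∈ ifree (idisjL Lneg), j < ds.length + 1 := by
          intro j hj
          have := hgoodJ.2 j hj
          omega
        have h5 : SatI (side M N t) c'' (ds ++ [d'']) (idisjL Lneg) :=
          (eval_ST_upd3l (side M N t) c' c'' d'' ds _ hbJ).1 h4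
        rw [satI_idisjL] at h5
        rcases h5 with ⟨i, hi, hSi⟩
        exact (hnegMem i hi).2 hSi
      rcases hkey with ⟨y, z, hy, hz, hnegEval⟩
      refine ⟨Function.update (Function.update f₀ 3 y) (2 * os.length) z, ?_, ?_⟩
      · intro v hv
        simp only [List.mem_cons, List.mem_singleton, not_or] at hv
        rcases hv with ⟨hv3, hv2⟩
        rw [upd_ne _ _ _ (by simpa using hv2), upd_ne _ _ _ hv3]
      · intro m hm
        cases m with
        | zero =>
          rw [he0, evalR, upd_ne _ _ _ (by omega), upd_ne _ _ _ (by omega), hf₀, pin_one,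
            upd_ne _ _ _ (by omega), upd_same]
          exact hy
        | succ m' =>
          cases m' with
          | zero =>
            rw [he1, evalE, upd_ne _ _ _ (by omega), upd_same, upd_same]
            exact hz
          | succ m'' =>
            rw [heS m'']
            by_cases hc : Good φ (os.length + 1) (iEnum m'') ∧
                ¬ SatI (side M N t) c'' (ds ++ [d'']) (iEnum m'')
            · rw [if_pos hc]
              intro hcon
              have hmem : iEnum m'' ∈ Lneg := by
                rw [hLneg, List.mem_filter]
                exact ⟨List.mem_map.2 ⟨m'', List.mem_range.2 (by omega), rfl⟩,
                  by simp [hc.1, hc.2]⟩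
              exact hnegEval ((eval_ST_idisjL Lneg (side M N s) _ 3).2 ⟨iEnum m'', hmem, hcon⟩)
            · rw [if_neg hc]
              rw [evalR, upd_ne _ _ _ (by omega), upd_ne _ _ _ (by omega), hf₀, pin_one,
                upd_ne _ _ _ (by omega), upd_same]
              exact hy
    rcases hside s f₀ [3, 2 * os.length] e hfin with ⟨g, hgoff, hgall⟩
    have hg1 : g 1 = a' := by
      rw [hgoff 1 (by simp; omega), hf₀, pin_one]
    have hrr : relR (side M N s) a' (g 3) := by
      have h0 := hgall 0
      rw [he0, evalR, hg1] at h0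
      exact h0
    have hre : relE (side M N s) (g 3) (g (2 * os.length)) := by
      have h1 := hgall 1
      rw [he1, evalE] at h1
      exact h1
    refine ⟨g 3, g (2 * os.length), hrr, hre, ⟨by simp [hlen], ?_⟩⟩
    intro i hgood hSat
    have hlen1 : (os ++ [g (2 * os.length)]).length = os.length + 1 := by simp
    rw [hlen1] at hgood
    by_contra hnot
    obtain ⟨k, rfl⟩ := iEnum_surj i
    have h := hgall (k+2)
    rw [heS k, if_pos (show Good φ (os.length + 1) (iEnum k) ∧
        ¬ SatI (side M N t) c'' (ds ++ [d'']) (iEnum k) from ⟨hgood, hnot⟩)] at h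
    exact h ((eval_ST_g3l (side M N s) a' os g hgoff _ hgood.2).2 hSat)

end IPC
namespace IPC

/-- The diagonal embedding into an ultrapower. -/
noncomputable def dg (M : Model) : M.D → (UProd hyU (fun _ : ℕ => M)).D :=
  fun x => ⟦fun _ => x⟧

lemma sat_up (M : Model) (n : ℕ) (ψ : Fml) (hok : FreeOK n ψ) (a : M.D) (bs : List M.D)
    (hlen : bs.length = n) :
    Sat M a bs ψ ↔ Sat (UProd hyU (fun _ => M)) (dg M a) (bs.map (dg M)) ψ := by
  rw [sat_iff_eval_pin hok hlen]
  rw [sat_iff_eval hok (by simp [hlen])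
    (g := fun v => (⟦fun _ => pin M a bs v⟧ : (UProd hyU (fun _ => M)).D))
    (by show (⟦fun _ => pin M a bs 1⟧ : (UProd hyU (fun _ => M)).D) = dg M a
        rw [pin_one]; rfl)
    ?_]
  · exact (diag_eval M hyU ψ (pin M a bs)).symm
  · intro i
    show (⟦fun _ => pin M a bs (2 * i.val)⟧ : (UProd hyU (fun _ => M)).D) = _
    have hi : i.val < bs.length := by
      have := i.isLt
      simpa using this
    rw [pin_obj' M a bs i.val hi]
    rw [List.get_eq_getElem, List.get_eq_getElem, List.getElem_map]
    rfl

theorem IC_entails' (φ : Fml) (n : ℕ) (hfree : FreeOK n φ)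
    (hinv : AsimInvariant φ n) : EntailsSet (IC φ n) φ := by
  classical
  intro N f hIC
  set c := f 1 with hc
  set ds : List N.D := List.ofFn (fun i : Fin n => f (2 * i.val)) with hds
  have hdslen : ds.length = n := by simp [hds]
  have hg2 : ∀ i : Fin ds.length, f (2 * i.val) = ds.get i :=
    fun i => (List.get_ofFn _ i).symm
  -- Step B : compactness
  set Γ₀ : Set Fml := insert φ
    { χ | ∃ i : IFml, χ = (ST i 1).neg ∧ Good φ n i ∧ ¬ Sat N c ds (ST i 1) } with hΓ₀
  have hfinsat : ∀ S : Finset Fml, ↑S ⊆ Γ₀ →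
      ∃ (M : Model) (g : ℕ → M.D), ∀ ψ ∈ S, ψ.eval M g := by
    intro S hS
    by_contra hnosat
    push_neg at hnosat
    set L : List IFml := S.toList.filterMap (fun χ =>
      if h : ∃ i : IFml, χ = (ST i 1).neg ∧ Good φ n i ∧ ¬ Sat N c ds (ST i 1)
      then some h.choose else none) with hL
    have hLmem : ∀ i ∈ L, Good φ n i ∧ ¬ Sat N c ds (ST i 1) := by
      intro i hi
      rw [hL] at hi
      rcases List.mem_filterMap.1 hi with ⟨χ, hχ, hsome⟩
      split_ifs at hsome with h
      · cases hsome
        exact ⟨h.choose_spec.2.1, h.choose_spec.2.2⟩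
    have hScov : ∀ χ ∈ S, χ = φ ∨ ∃ i ∈ L, χ = (ST i 1).neg := by
      intro χ hχ
      rcases hS hχ with rfl | hmem
      · exact Or.inl rfl
      · right
        have hex : ∃ i : IFml, χ = (ST i 1).neg ∧ Good φ n i ∧ ¬ Sat N c ds (ST i 1) := hmem
        refine ⟨hex.choose, ?_, hex.choose_spec.1⟩
        rw [hL]
        refine List.mem_filterMap.2 ⟨χ, Finset.mem_toList.2 hχ, ?_⟩
        rw [dif_pos hex]
    set χd : Fml := ST (idisjL L) 1 with hχd
    have hχIC : χd ∈ IC φ n := by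
      refine ⟨syms_ST_idisjL φ L (fun i hi => (hLmem i hi).1.1), ?_, ⟨idisjL L, rfl⟩, ?_⟩
      · refine FreeOK_of_ifree ?_
        intro j hj
        rcases ifree_idisjL L j hj with ⟨i, hi, hji⟩
        exact (hLmem i hi).1.2 j hji
      · intro M g hφ
        by_contra hnot
        rcases hnosat M g with ⟨ψ, hψ, hnev⟩
        refine hnev ?_
        rcases hScov ψ hψ with rfl | ⟨i, hi, rfl⟩
        · exact hφ
        · show ¬ (ST i 1).eval M g
          intro hcon
          exact hnot ((eval_ST_idisjL L M g 1).2 ⟨i, hi, hcon⟩)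
    have hev := hIC χd hχIC
    rw [hχd] at hev
    rcases (eval_ST_idisjL L N f 1).1 hev with ⟨i, hi, hievl⟩
    refine (hLmem i hi).2 ?_
    have hok : FreeOK n (ST i 1) := FreeOK_of_ifree (hLmem i hi).1.2
    exact (sat_iff_eval hok hdslen hc.symm hg2).2 hievl
  obtain ⟨M, g, hMg⟩ := compactness Γ₀ hfinsat
  set a := g 1 with ha
  set bs : List M.D := List.ofFn (fun i : Fin n => g (2 * i.val)) with hbs
  have hbslen : bs.length = n := by simp [hbs]
  have hgg2 : ∀ i : Fin bs.length, g (2 * i.val) = bs.get i :=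
    fun i => (List.get_ofFn _ i).symm
  have hSatφ : Sat M a bs φ :=
    (sat_iff_eval hfree hbslen ha.symm hgg2).2 (hMg φ (Set.mem_insert _ _))
  have hITL : ∀ i : IFml, Good φ n i → SatI M a bs i → SatI N c ds i := by
    intro i hgood hSi
    by_contra hnot
    have hok : FreeOK n (ST i 1) := FreeOK_of_ifree hgood.2
    have hnsat : ¬ Sat N c ds (ST i 1) := fun h => hnot ((sat_iff_satI hok hdslen).1 h)
    have hneg : (ST i 1).neg ∈ Γ₀ := Set.mem_insert_iff.2 (Or.inr ⟨i, rfl, hgood, hnsat⟩)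
    have hnev := hMg _ hneg
    exact hnev ((sat_iff_satI hok hbslen).2 hSi g ha.symm hgg2)
  -- Step C : ultrapowers
  set M' := UProd hyU (fun _ : ℕ => M) with hM'
  set N' := UProd hyU (fun _ : ℕ => N) with hN'
  have hA0 : ITLrel φ M' N' true false (dg M a) (bs.map (dg M)) (dg N c) (ds.map (dg N)) := by
    refine ⟨(List.length_map (dg M)).trans (hbslen.trans (hdslen.symm.trans (List.length_map (dg N)).symm)), ?_⟩
    intro i hgood hSi
    have hgood' : Good φ n i := by
      have : n = (bs.map (dg M)).length := hbslen.symm.trans (List.length_map (dg M)).symm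
      exact (congrArg (fun l => Good φ l i) this).mpr hgood
    have hok : FreeOK n (ST i 1) := FreeOK_of_ifree hgood'.2
    have h1 : Sat M a bs (ST i 1) := by
      rw [sat_up M n _ hok a bs hbslen]
      exact (sat_iff_satI hok (by simp [hbslen])).2 hSi
    have h2 : SatI M a bs i := (sat_iff_satI hok hbslen).1 h1
    have h3 : SatI N c ds i := hITL i hgood' h2
    have h4 : Sat N c ds (ST i 1) := (sat_iff_satI hok hdslen).2 h3
    rw [sat_up N n _ hok c ds hdslen] at h4
    exact (sat_iff_satI hok ((List.length_map (dg N)).trans hdslen)).1 h4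
  have hasim := ITL_isAsim φ M' N' (up_realizesSeq _) (up_realizesSeq _)
  have hSatφ' : Sat M' (dg M a) (bs.map (dg M)) φ := by
    rw [← sat_up M n φ hfree a bs hbslen]
    exact hSatφ
  have hres := hinv (↑(sigOf φ)) (by exact fun x hx => hx) M' N'
    (dg M a) (bs.map (dg M)) (dg N c) (ds.map (dg N))
    (by simp [hbslen]) (by simp [hdslen])
    ⟨ITLrel φ M' N', hasim, hA0⟩ hSatφ'
  have hback : Sat N c ds φ := by
    rw [sat_up N n φ hfree c ds hdslen]
    exact hres
  exact hback f hc.symm hg2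

end IPC

namespace IPC
/-- for satisfiable, asimulation-invariant φ, the intuitionistic
consequences of φ entail φ. -/
theorem IC_entails (φ : Fml) (n : ℕ) (hfree : FreeOK n φ) (hsat : Satisfiable φ)
    (hinv : AsimInvariant φ n) : EntailsSet (IC φ n) φ := by
  exact IC_entails' φ n hfree hinv
end IPC
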